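/- arXiv:1605.07082 — 6 statements merged into one kernel-verified Lean document; each statement's English description precedes it below -/
import Mathlib

section
/- Let Γ₁ and Γ₂ be groups, (G,γ) a (Γ₁⊕Γ₂)-labeled simple graph, k ≥ 1 an integer, and f : ℕ → ℕ a function. Assume: (a) G does not contain k pairwise vertex-disjoint (Γ₁,Γ₂)-non-zero cycles; (b) there is no set X ⊆ V(G) with |X| ≤ f(k) such that G−X contains no (Γ₁,Γ₂)-non-zero cycle; (c) for every Y ⊆ V(G), the labeled graph G−Y either contains k−1 pairwise vertex-disjoint (Γ₁,Γ₂)-non-zero cycles or a set of at most f(k−1) vertices intersecting every (Γ₁,Γ₂)-non-zero cycle of G−Y. Let t ≥ 1 be an integer with t ≤ f(k) − 2·f(k−1) and 3t ≤ f(k). Then the set 𝒯 of all (t−1)-separations (A,B) of G such that B contains a (Γ₁,Γ₂)-non-zero cycle is a tangle of order t in G. -/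
open SimpleGraph

/-- The group-value of a walk in a group-labeled graph. -/
def walkVal {V Γ : Type} [Group Γ] {G : SimpleGraph V} (γ : V → V → Γ)
    {u v : V} (w : G.Walk u v) : Γ :=
  (w.darts.map fun d => γ d.toProd.1 d.toProd.2).prod

/-- `γ` is a labeling of the simple graph `G`. -/
def IsLab {V Γ : Type} [Group Γ] (G : SimpleGraph V) (γ : V → V → Γ) : Prop :=
  ∀ u v : V, G.Adj u v → γ v u = (γ u v)⁻¹

/-- A walk is `(Γ₁,Γ₂)`-non-zero if its value is non-identity in both coordinates. -/
def DNZ {V Γ₁ Γ₂ : Type} [Group Γ₁] [Group Γ₂] {G : SimpleGraph V}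
    (γ : V → V → Γ₁ × Γ₂) {u v : V} (w : G.Walk u v) : Prop :=
  walkVal (fun a b => (γ a b).1) w ≠ 1 ∧ walkVal (fun a b => (γ a b).2) w ≠ 1

/-- `(A, B)` is a `k`-separation of `G`: `A ∪ B = G`, `A` and `B` are edge-disjoint,
and the separator `V(A) ∩ V(B)` is finite of size at most `k`. -/
def IsSep {V : Type} (G : SimpleGraph V) (k : ℕ) (A B : G.Subgraph) : Prop :=
  A ⊔ B = ⊤ ∧ (∀ u v : V, ¬ (A.Adj u v ∧ B.Adj u v)) ∧
    (A.verts ∩ B.verts).Finite ∧ (A.verts ∩ B.verts).ncard ≤ k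

/-- `T` is a tangle of order `t` in `G`. -/
def IsTangle {V : Type} (G : SimpleGraph V) (t : ℕ)
    (T : Set (G.Subgraph × G.Subgraph)) : Prop :=
  (∀ p ∈ T, IsSep G (t - 1) p.1 p.2) ∧
  (∀ A B : G.Subgraph, IsSep G (t - 1) A B → (A, B) ∈ T ∨ (B, A) ∈ T) ∧
  (∀ p ∈ T, p.1.verts ≠ Set.univ) ∧
  (∀ p ∈ T, ∀ q ∈ T, ∀ r ∈ T, p.1 ⊔ q.1 ⊔ r.1 ≠ ⊤)

/-- A closed walk of `G` lies in the subgraph `B`: every dart of the walk is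
an adjacency of `B`. -/
def CycIn {V : Type} {G : SimpleGraph V} (B : G.Subgraph) {u : V} (c : G.Walk u u) : Prop :=
  ∀ d ∈ c.darts, B.Adj d.toProd.1 d.toProd.2


section Aux

variable {V : Type} {G : SimpleGraph V}

private lemma walk_side {A B : G.Subgraph} (hAB : A ⊔ B = ⊤) :
    ∀ {a b : V} (w : G.Walk a b),
      (∀ v ∈ w.support, ¬ (v ∈ A.verts ∧ v ∈ B.verts)) →
      ∀ v ∈ w.support, (v ∈ A.verts ↔ a ∈ A.verts) := by
  intro a b w
  induction w with
  | nil =>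
    intro _ v hv
    simp only [SimpleGraph.Walk.support_nil, List.mem_singleton] at hv
    subst hv; rfl
  | @cons a c b hadj p ih =>
    intro hav v hv
    have hstep : c ∈ A.verts ↔ a ∈ A.verts := by
      have hedge : A.Adj a c ∨ B.Adj a c := by
        have : (A ⊔ B).Adj a c := by rw [hAB]; exact SimpleGraph.Subgraph.top_adj.mpr hadj
        exact SimpleGraph.Subgraph.sup_adj.mp this
      rcases hedge with h | h
      · exact iff_of_true h.snd_mem h.fst_mem
      · constructor
        · intro hcA
          exact absurd ⟨hcA, h.snd_mem⟩
            (hav c (by simp [SimpleGraph.Walk.support_cons, SimpleGraph.Walk.start_mem_support]))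
        · intro haA
          exact absurd ⟨haA, h.fst_mem⟩
            (hav a (by simp [SimpleGraph.Walk.support_cons]))
    rw [SimpleGraph.Walk.support_cons, List.mem_cons] at hv
    rcases hv with rfl | hv
    · rfl
    · have hav' : ∀ v ∈ p.support, ¬ (v ∈ A.verts ∧ v ∈ B.verts) := by
        intro v hv
        exact hav v (by rw [SimpleGraph.Walk.support_cons]; exact List.mem_cons_of_mem _ hv)
      exact (ih hav' v hv).trans hstep

private lemma cycIn_support_subset {B : G.Subgraph}
    {u : V} {c : G.Walk u u} (hcyc : c.IsCycle) (h : CycIn B c) :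
    ∀ v ∈ c.support, v ∈ B.verts := by
  intro v hv
  rcases (SimpleGraph.Walk.mem_support_iff _).mp hv with rfl | hv
  · cases c with
    | nil => exact absurd rfl hcyc.ne_nil
    | cons hadj p =>
      have hd : (⟨(v, _), hadj⟩ : G.Dart) ∈ (SimpleGraph.Walk.cons hadj p).darts := by
        rw [SimpleGraph.Walk.darts_cons]; exact List.mem_cons_self
      exact (h _ hd).fst_mem
  · rw [← SimpleGraph.Walk.map_snd_darts] at hv
    rcases List.mem_map.mp hv with ⟨d, hd, rfl⟩
    exact (h d hd).snd_mem

end Aux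

/-- Lemma 2.1 (Wollan): in a minimal counterexample to `f` being an Erdős–Pósa function
for `(Γ₁,Γ₂)`-non-zero cycles, the set of `(t-1)`-separations whose big side contains a
`(Γ₁,Γ₂)`-non-zero cycle is a tangle of order `t`. -/
theorem tangle_of_minimal_counterexample
    {V Γ₁ Γ₂ : Type} [Group Γ₁] [Group Γ₂] (G : SimpleGraph V)
    (γ : V → V → Γ₁ × Γ₂) (hγ : IsLab G γ) (k : ℕ) (hk : 1 ≤ k) (f : ℕ → ℕ)
    (ha : ¬ ∃ (u : Fin k → V) (c : ∀ i, G.Walk (u i) (u i)),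
        (∀ i, (c i).IsCycle) ∧ (∀ i, DNZ γ (c i)) ∧
        (∀ i j, i ≠ j → ∀ v : V, v ∈ (c i).support → v ∉ (c j).support))
    (hb : ¬ ∃ X : Finset V, X.card ≤ f k ∧
        ∀ (u : V) (c : G.Walk u u), c.IsCycle → DNZ γ c → ∃ x ∈ X, x ∈ c.support)
    (hc : ∀ Y : Set V,
        (∃ (u : Fin (k - 1) → V) (c : ∀ i, G.Walk (u i) (u i)),
            (∀ i, (c i).IsCycle) ∧ (∀ i, DNZ γ (c i)) ∧
            (∀ i, ∀ v ∈ (c i).support, v ∉ Y) ∧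
            (∀ i j, i ≠ j → ∀ v : V, v ∈ (c i).support → v ∉ (c j).support)) ∨
        (∃ X : Finset V, X.card ≤ f (k - 1) ∧ (∀ x ∈ X, x ∉ Y) ∧
            ∀ (u : V) (c : G.Walk u u), c.IsCycle → DNZ γ c →
              (∀ v ∈ c.support, v ∉ Y) → ∃ x ∈ X, x ∈ c.support))
    (t : ℕ) (ht1 : 1 ≤ t) (ht2 : t + 2 * f (k - 1) ≤ f k) (ht3 : 3 * t ≤ f k) :
    IsTangle G t {p : G.Subgraph × G.Subgraph |
      IsSep G (t - 1) p.1 p.2 ∧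
        ∃ (u : V) (c : G.Walk u u), c.IsCycle ∧ DNZ γ c ∧ CycIn p.2 c} := by
  classical
  obtain ⟨m, rfl⟩ : ∃ m, k = m + 1 := ⟨k - 1, (Nat.succ_pred_eq_of_pos hk).symm⟩
  have ht2' : t + 2 * f m ≤ f (m + 1) := ht2
  -- no small hitting set, restated positively
  have hbX : ∀ X : Finset V, X.card ≤ f (m + 1) →
      ∃ u, ∃ c : G.Walk u u, c.IsCycle ∧ DNZ γ c ∧ ∀ v ∈ c.support, v ∉ X := by
    intro X hX
    by_contra h
    push_neg at h
    refine hb ⟨X, hX, fun u c hcyc hd => ?_⟩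
    obtain ⟨v, hv, hvX⟩ := h u c hcyc hd
    exact ⟨v, hvX, hv⟩
  -- m ≥ 1
  have hm : 1 ≤ m := by
    by_contra hm
    have hm0 : m = 0 := by omega
    subst hm0
    refine hb ⟨∅, by simp, fun u c hcyc hd => ?_⟩
    exact absurd ⟨fun _ => u, fun _ => c, fun _ => hcyc, fun _ => hd,
      fun i j hij => absurd (Fin.ext (by have := i.isLt; have := j.isLt; omega)) hij⟩ ha
  -- extending a family of m disjoint cycles by one more disjoint cycle contradicts ha
  have hext : ∀ (u₀ : V) (c₀ : G.Walk u₀ u₀), c₀.IsCycle → DNZ γ c₀ →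
      ∀ (u : Fin m → V) (c : ∀ i, G.Walk (u i) (u i)),
        (∀ i, (c i).IsCycle) → (∀ i, DNZ γ (c i)) →
        (∀ i, ∀ v ∈ (c i).support, v ∉ c₀.support) →
        (∀ i j, i ≠ j → ∀ v : V, v ∈ (c i).support → v ∉ (c j).support) → False := by
    intro u₀ c₀ h₀ d₀ u c hcyc hdnz hav hdisj
    set F : ∀ _ : Fin (m + 1), Σ v : V, G.Walk v v :=
      Fin.cases ⟨u₀, c₀⟩ (fun i => ⟨u i, c i⟩) with hF
    have hF0 : F 0 = ⟨u₀, c₀⟩ := by simp [hF]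
    have hFs : ∀ i : Fin m, F i.succ = ⟨u i, c i⟩ := by intro i; simp [hF]
    refine ha ⟨fun i => (F i).1, fun i => (F i).2, ?_, ?_, ?_⟩
    · intro i
      induction i using Fin.cases with
      | zero => simp only [hF0]; exact h₀
      | succ i => simp only [hFs]; exact hcyc i
    · intro i
      induction i using Fin.cases with
      | zero => simp only [hF0]; exact d₀
      | succ i => simp only [hFs]; exact hdnz i
    · intro i j hij
      induction i using Fin.cases with
      | zero =>
        induction j using Fin.cases with
        | zero => exact absurd rfl hij
        | succ j =>
          simp only [hF0, hFs]
          intro v hv hv'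
          exact hav j v hv' hv
      | succ i =>
        induction j using Fin.cases with
        | zero =>
          simp only [hF0, hFs]
          intro v hv hv'
          exact hav i v hv hv'
        | succ j =>
          simp only [hFs]
          exact hdisj i j (fun h => hij (congrArg Fin.succ h))
  -- vertex cover by the two sides
  have hverts : ∀ A B : G.Subgraph, A ⊔ B = ⊤ → ∀ v : V, v ∈ A.verts ∨ v ∈ B.verts := by
    intro A B hAB v
    have : v ∈ (A ⊔ B).verts := by rw [hAB, Subgraph.verts_top]; trivial
    rwa [Subgraph.verts_sup] at this
  -- a cycle avoiding the separator lies on one side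
  have hside : ∀ A B : G.Subgraph, A ⊔ B = ⊤ →
      ∀ (u₀ : V) (c₀ : G.Walk u₀ u₀),
        (∀ v ∈ c₀.support, ¬ (v ∈ A.verts ∧ v ∈ B.verts)) →
        (∀ v ∈ c₀.support, v ∉ A.verts) ∨ (∀ v ∈ c₀.support, v ∉ B.verts) := by
    intro A B hAB u₀ c₀ hZ
    have hiff := walk_side hAB c₀ hZ
    by_cases h : u₀ ∈ A.verts
    · refine Or.inr fun v hv hvB => hZ v hv ⟨(hiff v hv).mpr h, hvB⟩
    · exact Or.inl fun v hv hvA => h ((hiff v hv).mp hvA)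
  -- a cycle avoiding A.verts is contained in B
  have hCycInOfAvoid : ∀ A B : G.Subgraph, A ⊔ B = ⊤ →
      ∀ (u₀ : V) (c₀ : G.Walk u₀ u₀), (∀ v ∈ c₀.support, v ∉ A.verts) → CycIn B c₀ := by
    intro A B hAB u₀ c₀ hav d hd
    have hadj : (A ⊔ B).Adj d.toProd.1 d.toProd.2 := by
      rw [hAB]; exact Subgraph.top_adj.mpr d.adj
    rcases Subgraph.sup_adj.mp hadj with h | h
    · exact absurd h.fst_mem (hav _ (Walk.dart_fst_mem_support_of_mem_darts _ hd))
    · exact h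
  have hsymm : ∀ A B : G.Subgraph, IsSep G (t - 1) A B → IsSep G (t - 1) B A := by
    rintro A B ⟨h1, h2, h3, h4⟩
    exact ⟨by rwa [sup_comm], fun u v h => h2 u v ⟨h.2, h.1⟩,
      by rwa [Set.inter_comm], by rwa [Set.inter_comm]⟩
  -- core: for any (t-1)-separation, some side is avoided by a DNZ cycle
  have core : ∀ A B : G.Subgraph, IsSep G (t - 1) A B →
      (∃ u, ∃ c : G.Walk u u, c.IsCycle ∧ DNZ γ c ∧ ∀ v ∈ c.support, v ∉ A.verts) ∨
      (∃ u, ∃ c : G.Walk u u, c.IsCycle ∧ DNZ γ c ∧ ∀ v ∈ c.support, v ∉ B.verts) := by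
    intro A B hsep
    obtain ⟨hAB, hE, hfin, hcard⟩ := hsep
    rcases hc A.verts with ⟨u, c, h1, h2, h3, _⟩ | ⟨X₁, hX₁c, _, hX₁⟩
    · exact Or.inl ⟨u ⟨0, hm⟩, c ⟨0, hm⟩, h1 _, h2 _, h3 _⟩
    rcases hc B.verts with ⟨u, c, h1, h2, h3, _⟩ | ⟨X₂, hX₂c, _, hX₂⟩
    · exact Or.inr ⟨u ⟨0, hm⟩, c ⟨0, hm⟩, h1 _, h2 _, h3 _⟩
    exfalso
    have hZcard : hfin.toFinset.card ≤ t - 1 := by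
      rwa [← Set.ncard_eq_toFinset_card _ hfin]
    have hXcard : (X₁ ∪ X₂ ∪ hfin.toFinset).card ≤ f (m + 1) := by
      calc (X₁ ∪ X₂ ∪ hfin.toFinset).card ≤ (X₁ ∪ X₂).card + hfin.toFinset.card :=
            Finset.card_union_le _ _
        _ ≤ X₁.card + X₂.card + hfin.toFinset.card :=
            Nat.add_le_add_right (Finset.card_union_le _ _) _
        _ ≤ f m + f m + (t - 1) := by
            have h1 : X₁.card ≤ f m := hX₁c
            have h2 : X₂.card ≤ f m := hX₂c
            omega
        _ ≤ f (m + 1) := by omega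
    obtain ⟨u₀, c₀, h1, h2, h3⟩ := hbX _ hXcard
    have hZav : ∀ v ∈ c₀.support, ¬ (v ∈ A.verts ∧ v ∈ B.verts) := by
      intro v hv hmem
      exact h3 v hv (by
        simp only [Finset.mem_union, Set.Finite.mem_toFinset]
        exact Or.inr ⟨hmem.1, hmem.2⟩)
    rcases hside A B hAB u₀ c₀ hZav with h | h
    · obtain ⟨x, hx, hxs⟩ := hX₁ u₀ c₀ h1 h2 h
      exact h3 x hxs (by simp only [Finset.mem_union]; exact Or.inl (Or.inl hx))
    · obtain ⟨x, hx, hxs⟩ := hX₂ u₀ c₀ h1 h2 h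
      exact h3 x hxs (by simp only [Finset.mem_union]; exact Or.inl (Or.inr hx))
  -- main3: a DNZ cycle avoiding B.verts, while B contains a DNZ cycle, is impossible
  have main3 : ∀ A B : G.Subgraph, IsSep G (t - 1) A B →
      (∃ u, ∃ c : G.Walk u u, c.IsCycle ∧ DNZ γ c ∧ CycIn B c) →
      ∀ (u₀ : V) (c₀ : G.Walk u₀ u₀), c₀.IsCycle → DNZ γ c₀ →
        (∀ v ∈ c₀.support, v ∉ B.verts) → False := by
    intro A B hsep hD u₀ c₀ h₀cyc h₀dnz h₀av
    obtain ⟨hAB, hE, hfin, hcard⟩ := hsep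
    obtain ⟨uD, D, hDcyc, hDdnz, hDin⟩ := hD
    have hDsupp : ∀ v ∈ D.support, v ∈ B.verts := cycIn_support_subset hDcyc hDin
    have h₀A : ∀ v ∈ c₀.support, v ∈ A.verts := fun v hv =>
      (hverts A B hAB v).resolve_right (h₀av v hv)
    rcases hc {v | v ∈ c₀.support} with ⟨u, c, h1, h2, h3, h4⟩ | ⟨X₁, hX₁c, _, hX₁⟩
    · exact hext u₀ c₀ h₀cyc h₀dnz u c h1 h2 (fun i v hv => h3 i v hv) h4
    rcases hc B.verts with ⟨u, c, h1, h2, h3, h4⟩ | ⟨X₂, hX₂c, _, hX₂⟩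
    · exact hext uD D hDcyc hDdnz u c h1 h2
        (fun i v hv hvD => h3 i v hv (hDsupp v hvD)) h4
    have hZcard : hfin.toFinset.card ≤ t - 1 := by
      rwa [← Set.ncard_eq_toFinset_card _ hfin]
    have hXcard : (X₁ ∪ X₂ ∪ hfin.toFinset).card ≤ f (m + 1) := by
      calc (X₁ ∪ X₂ ∪ hfin.toFinset).card ≤ (X₁ ∪ X₂).card + hfin.toFinset.card :=
            Finset.card_union_le _ _
        _ ≤ X₁.card + X₂.card + hfin.toFinset.card :=
            Nat.add_le_add_right (Finset.card_union_le _ _) _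
        _ ≤ f m + f m + (t - 1) := by
            have h1 : X₁.card ≤ f m := hX₁c
            have h2 : X₂.card ≤ f m := hX₂c
            omega
        _ ≤ f (m + 1) := by omega
    obtain ⟨uE, E, hE1, hE2, hE3⟩ := hbX _ hXcard
    have hZav : ∀ v ∈ E.support, ¬ (v ∈ A.verts ∧ v ∈ B.verts) := by
      intro v hv hmem
      exact hE3 v hv (by
        simp only [Finset.mem_union, Set.Finite.mem_toFinset]
        exact Or.inr ⟨hmem.1, hmem.2⟩)
    rcases hside A B hAB uE E hZav with h | h
    · have havC : ∀ v ∈ E.support, v ∉ ({v | v ∈ c₀.support} : Set V) :=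
        fun v hv hvc => h v hv (h₀A v hvc)
      obtain ⟨x, hx, hxs⟩ := hX₁ uE E hE1 hE2 havC
      exact hE3 x hxs (by simp only [Finset.mem_union]; exact Or.inl (Or.inl hx))
    · obtain ⟨x, hx, hxs⟩ := hX₂ uE E hE1 hE2 h
      exact hE3 x hxs (by simp only [Finset.mem_union]; exact Or.inl (Or.inr hx))
  refine ⟨fun p hp => hp.1, ?_, ?_, ?_⟩
  · -- (T1)
    intro A B hsep
    rcases core A B hsep with ⟨u₀, c₀, h1, h2, h3⟩ | ⟨u₀, c₀, h1, h2, h3⟩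
    · exact Or.inl ⟨hsep, u₀, c₀, h1, h2, hCycInOfAvoid A B hsep.1 u₀ c₀ h3⟩
    · exact Or.inr ⟨hsymm A B hsep, u₀, c₀, h1, h2,
        hCycInOfAvoid B A (by rw [sup_comm]; exact hsep.1) u₀ c₀ h3⟩
  · -- (T2)
    rintro ⟨A, B⟩ ⟨hsep, uD, D, hDcyc, hDdnz, hDin⟩ hA
    obtain ⟨hAB, hE, hfin, hcard⟩ := hsep
    have hBeq : A.verts ∩ B.verts = B.verts := by
      rw [show A.verts = Set.univ from hA, Set.univ_inter]
    have hDsupp : ∀ v ∈ D.support, v ∈ B.verts := cycIn_support_subset hDcyc hDin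
    rcases hc B.verts with ⟨u, c, h1, h2, h3, h4⟩ | ⟨X₁, hX₁c, _, hX₁⟩
    · exact hext uD D hDcyc hDdnz u c h1 h2
        (fun i v hv hvD => h3 i v hv (hDsupp v hvD)) h4
    · have hZcard : hfin.toFinset.card ≤ t - 1 := by
        rwa [← Set.ncard_eq_toFinset_card _ hfin]
      have hXcard : (X₁ ∪ hfin.toFinset).card ≤ f (m + 1) := by
        calc (X₁ ∪ hfin.toFinset).card ≤ X₁.card + hfin.toFinset.card :=
              Finset.card_union_le _ _
          _ ≤ f m + (t - 1) := by
              have h1 : X₁.card ≤ f m := hX₁c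
              omega
          _ ≤ f (m + 1) := by omega
      obtain ⟨u₀, c₀, h1, h2, h3⟩ := hbX _ hXcard
      have hav : ∀ v ∈ c₀.support, v ∉ B.verts := by
        intro v hv hvB
        exact h3 v hv (by
          simp only [Finset.mem_union, Set.Finite.mem_toFinset]
          refine Or.inr ?_
          rw [hBeq]
          exact hvB)
      obtain ⟨x, hx, hxs⟩ := hX₁ u₀ c₀ h1 h2 hav
      exact h3 x hxs (by simp only [Finset.mem_union]; exact Or.inl hx)
  · -- (T3)
    rintro ⟨A₁, B₁⟩ ⟨hsep₁, hD₁⟩ ⟨A₂, B₂⟩ ⟨hsep₂, hD₂⟩ ⟨A₃, B₃⟩ ⟨hsep₃, hD₃⟩ hsup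
    obtain ⟨hAB₁, hE₁, hfin₁, hcard₁⟩ := hsep₁
    obtain ⟨hAB₂, hE₂, hfin₂, hcard₂⟩ := hsep₂
    obtain ⟨hAB₃, hE₃, hfin₃, hcard₃⟩ := hsep₃
    have hZ₁ : hfin₁.toFinset.card ≤ t - 1 := by
      rwa [← Set.ncard_eq_toFinset_card _ hfin₁]
    have hZ₂ : hfin₂.toFinset.card ≤ t - 1 := by
      rwa [← Set.ncard_eq_toFinset_card _ hfin₂]
    have hZ₃ : hfin₃.toFinset.card ≤ t - 1 := by
      rwa [← Set.ncard_eq_toFinset_card _ hfin₃]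
    have hXcard : (hfin₁.toFinset ∪ hfin₂.toFinset ∪ hfin₃.toFinset).card ≤ f (m + 1) := by
      calc (hfin₁.toFinset ∪ hfin₂.toFinset ∪ hfin₃.toFinset).card
          ≤ (hfin₁.toFinset ∪ hfin₂.toFinset).card + hfin₃.toFinset.card :=
            Finset.card_union_le _ _
        _ ≤ hfin₁.toFinset.card + hfin₂.toFinset.card + hfin₃.toFinset.card :=
            Nat.add_le_add_right (Finset.card_union_le _ _) _
        _ ≤ f (m + 1) := by omega
    obtain ⟨u₀, c₀, h₀cyc, h₀dnz, h₀av⟩ := hbX _ hXcard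
    have hav₁ : ∀ v ∈ c₀.support, ¬ (v ∈ A₁.verts ∧ v ∈ B₁.verts) := by
      intro v hv hmem
      exact h₀av v hv (by
        simp only [Finset.mem_union, Set.Finite.mem_toFinset]
        exact Or.inl (Or.inl ⟨hmem.1, hmem.2⟩))
    have hav₂ : ∀ v ∈ c₀.support, ¬ (v ∈ A₂.verts ∧ v ∈ B₂.verts) := by
      intro v hv hmem
      exact h₀av v hv (by
        simp only [Finset.mem_union, Set.Finite.mem_toFinset]
        exact Or.inl (Or.inr ⟨hmem.1, hmem.2⟩))
    have hav₃ : ∀ v ∈ c₀.support, ¬ (v ∈ A₃.verts ∧ v ∈ B₃.verts) := by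
      intro v hv hmem
      exact h₀av v hv (by
        simp only [Finset.mem_union, Set.Finite.mem_toFinset]
        exact Or.inr ⟨hmem.1, hmem.2⟩)
    -- get a dart of c₀
    have hdartne : c₀.darts ≠ [] := by
      intro h
      have h3l := h₀cyc.three_le_length
      have := c₀.length_darts
      rw [h] at this
      simp at this
      omega
    obtain ⟨d, hd⟩ := List.exists_mem_of_ne_nil _ hdartne
    have hdfst : d.toProd.1 ∈ c₀.support := Walk.dart_fst_mem_support_of_mem_darts _ hd
    have hcov : A₁.Adj d.toProd.1 d.toProd.2 ∨ A₂.Adj d.toProd.1 d.toProd.2 ∨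
        A₃.Adj d.toProd.1 d.toProd.2 := by
      have : (A₁ ⊔ A₂ ⊔ A₃).Adj d.toProd.1 d.toProd.2 := by
        rw [hsup]; exact Subgraph.top_adj.mpr d.adj
      rcases Subgraph.sup_adj.mp this with h | h
      · rcases Subgraph.sup_adj.mp h with h | h
        · exact Or.inl h
        · exact Or.inr (Or.inl h)
      · exact Or.inr (Or.inr h)
    have key : ∀ (A B : G.Subgraph), A ⊔ B = ⊤ →
        (∀ v ∈ c₀.support, ¬ (v ∈ A.verts ∧ v ∈ B.verts)) →
        A.Adj d.toProd.1 d.toProd.2 →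
        ∀ v ∈ c₀.support, v ∉ B.verts := by
      intro A B hAB hav hAdj v hv hvB
      have hiff := walk_side hAB c₀ hav
      have hu₀ : u₀ ∈ A.verts := (hiff _ hdfst).mp hAdj.fst_mem
      exact hav v hv ⟨(hiff v hv).mpr hu₀, hvB⟩
    rcases hcov with h | h | h
    · exact main3 A₁ B₁ ⟨hAB₁, hE₁, hfin₁, hcard₁⟩ hD₁ u₀ c₀ h₀cyc h₀dnz
        (key A₁ B₁ hAB₁ hav₁ h)
    · exact main3 A₂ B₂ ⟨hAB₂, hE₂, hfin₂, hcard₂⟩ hD₂ u₀ c₀ h₀cyc h₀dnz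
        (key A₂ B₂ hAB₂ hav₂ h)
    · exact main3 A₃ B₃ ⟨hAB₃, hE₃, hfin₃, hcard₃⟩ hD₃ u₀ c₀ h₀cyc h₀dnz
        (key A₃ B₃ hAB₃ hav₃ h)
end

section
/- Let Γ₁ and Γ₂ be groups and (G,γ) a (Γ₁⊕Γ₂)-labeled simple graph. Suppose G contains two vertex-disjoint cycles C₁ and C₂ and two vertex-disjoint C₁–C₂-paths P₁ and P₂ (each with one end on C₁, the other end on C₂, and no internal vertex on C₁ ∪ C₂), such that C₁ is Γ₁-non-zero and C₂ is Γ₂-non-zero. Then the subgraph C₁ ∪ C₂ ∪ P₁ ∪ P₂ contains a (Γ₁,Γ₂)-non-zero cycle. -/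
open SimpleGraph

section Helpers

variable {V Γ : Type} [Group Γ] {G : SimpleGraph V}

lemma walkVal_nil (γ : V → V → Γ) {u : V} : walkVal γ (Walk.nil : G.Walk u u) = 1 := rfl

lemma walkVal_cons (γ : V → V → Γ) {u v w : V} (h : G.Adj u v) (p : G.Walk v w) :
    walkVal γ (Walk.cons h p) = γ u v * walkVal γ p := by
  simp [walkVal]

lemma walkVal_append (γ : V → V → Γ) {u v w : V} (p : G.Walk u v) (q : G.Walk v w) :
    walkVal γ (p.append q) = walkVal γ p * walkVal γ q := by
  simp [walkVal, Walk.darts_append]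

lemma walkVal_reverse (γ : V → V → Γ) (hγ : IsLab G γ) {u v : V} (p : G.Walk u v) :
    walkVal γ p.reverse = (walkVal γ p)⁻¹ := by
  induction p with
  | nil => simp [walkVal]
  | cons h p ih =>
    rw [Walk.reverse_cons, walkVal_append, walkVal_cons, walkVal_cons, walkVal_nil, ih,
      hγ _ _ h, mul_inv_rev]
    group

lemma end_mem_tail {x y : V} (p : G.Walk x y) (hxy : x ≠ y) : y ∈ p.support.tail := by
  cases p with
  | nil => exact absurd rfl hxy
  | cons h p => simpa using p.end_mem_support

lemma closed_mem_support_iff {u : V} {c : G.Walk u u} (hc : c ≠ Walk.nil) {x : V} :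
    x ∈ c.support ↔ x ∈ c.support.tail := by
  constructor
  · intro hx
    rw [c.support_eq_cons, List.mem_cons] at hx
    rcases hx with rfl | hx
    · cases c with
      | nil => exact absurd rfl hc
      | cons h p => simpa using p.end_mem_support
    · exact hx
  · intro hx
    rw [c.support_eq_cons]
    exact List.mem_cons_of_mem _ hx

lemma mem_support_rotate_iff [DecidableEq V] {u w : V} {c : G.Walk u u} (hc : c.IsCycle)
    (h : w ∈ c.support) {x : V} :
    x ∈ (c.rotate w h).support ↔ x ∈ c.support := by
  rw [closed_mem_support_iff (hc.rotate h).ne_nil, closed_mem_support_iff hc.ne_nil,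
    (Walk.support_rotate c w h).perm.mem_iff]

lemma isPath_append_of_meet {u v w : V} {p : G.Walk u v} {q : G.Walk v w}
    (hp : p.IsPath) (hq : q.IsPath)
    (hmeet : ∀ x, x ∈ p.support → x ∈ q.support → x = v) :
    (p.append q).IsPath := by
  rw [Walk.isPath_def, Walk.support_append, List.nodup_append]
  refine ⟨hp.support_nodup, ?_, ?_⟩
  · have := hq.support_nodup
    rw [q.support_eq_cons] at this
    exact this.of_cons
  · intro x hx y hx' hxy
    subst hxy
    have hxq : x ∈ q.support := List.mem_of_mem_tail hx'
    have : x = v := hmeet x hx hxq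
    subst this
    have := hq.support_nodup
    rw [q.support_eq_cons, List.nodup_cons] at this
    exact this.1 hx'

lemma isCycle_append_of_meet {u v : V} {p : G.Walk u v} {q : G.Walk v u}
    (hp : p.IsPath) (hq : q.IsPath) (huv : u ≠ v)
    (hmeet : ∀ x, x ∈ p.support → x ∈ q.support → x = u ∨ x = v)
    (hedge : ∀ e, e ∈ p.edges → e ∉ q.edges) :
    (p.append q).IsCycle := by
  have hpnodup := hp.support_nodup
  have hqnodup := hq.support_nodup
  rw [p.support_eq_cons, List.nodup_cons] at hpnodup
  rw [q.support_eq_cons, List.nodup_cons] at hqnodup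
  rw [Walk.isCycle_def]
  refine ⟨?_, ?_, ?_⟩
  · rw [Walk.isTrail_def, Walk.edges_append, List.nodup_append]
    exact ⟨hp.isTrail.edges_nodup, hq.isTrail.edges_nodup, fun e he e' he' hee => hedge e he (hee ▸ he')⟩
  · cases p with
    | nil => exact absurd rfl huv
    | cons h p => simp [Walk.cons_append]
  · have hsupp : (p.append q).support.tail = p.support.tail ++ q.support.tail := by
      rw [Walk.support_append, p.support_eq_cons]
      rfl
    rw [hsupp, List.nodup_append]
    refine ⟨hpnodup.2, hqnodup.2, ?_⟩
    intro x hx y hx' hxy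
    subst hxy
    have hxp : x ∈ p.support := List.mem_of_mem_tail hx
    have hxq : x ∈ q.support := List.mem_of_mem_tail hx'
    rcases hmeet x hxp hxq with rfl | rfl
    · exact hpnodup.1 hx
    · exact hqnodup.1 hx'

lemma cycle_split [DecidableEq V] {u w : V} {c : G.Walk u u} (hc : c.IsCycle)
    (h : w ∈ c.support) (hw : w ≠ u) :
    ∃ (t : G.Walk u w) (d : G.Walk w u), t.IsPath ∧ d.IsPath ∧
      (∀ z ∈ t.support, z ∈ c.support) ∧ (∀ z ∈ d.support, z ∈ c.support) ∧
      (∀ e ∈ t.edges, e ∈ c.edges) ∧ (∀ e ∈ d.edges, e ∈ c.edges) ∧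
      ∀ (Γ' : Type) [Group Γ'] (γ' : V → V → Γ'),
        walkVal γ' t * walkVal γ' d = walkVal γ' c := by
  refine ⟨c.takeUntil w h, c.dropUntil w h, ?_, ?_,
    fun z hz => c.support_takeUntil_subset h hz, fun z hz => c.support_dropUntil_subset h hz,
    fun e he => c.edges_takeUntil_subset h he, fun e he => c.edges_dropUntil_subset h he,
    fun Γ' _ γ' => by rw [← walkVal_append, c.take_spec h]⟩
  all_goals {
    have htail : c.support.tail =
        (c.takeUntil w h).support.tail ++ (c.dropUntil w h).support.tail := by
      conv_lhs => rw [← c.take_spec h]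
      rw [Walk.support_append, (c.takeUntil w h).support_eq_cons]
      rfl
    have hnodup := hc.2
    rw [htail, List.nodup_append] at hnodup
    obtain ⟨ht1, hd1, hdisj⟩ := hnodup
    have humem : u ∈ (c.dropUntil w h).support.tail := end_mem_tail _ hw
    have hwmem : w ∈ (c.takeUntil w h).support.tail :=
      end_mem_tail _ (fun h' => hw h'.symm)
    rw [Walk.isPath_def, Walk.support_eq_cons, List.nodup_cons]
    first
    | exact ⟨fun hm => hdisj _ hm _ humem rfl, ht1⟩
    | exact ⟨fun hm => hdisj _ hwmem _ hm rfl, hd1⟩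
  }

lemma rotate_val_one_iff [DecidableEq V] {u w : V} (c : G.Walk u u) (h : w ∈ c.support)
    (γ : V → V → Γ) : (walkVal γ (c.rotate w h) = 1) ↔ (walkVal γ c = 1) := by
  have hrot : walkVal γ (c.rotate w h) =
      walkVal γ (c.dropUntil w h) * walkVal γ (c.takeUntil w h) := by
    rw [Walk.rotate, walkVal_append]
  have hcv : walkVal γ c =
      walkVal γ (c.takeUntil w h) * walkVal γ (c.dropUntil w h) := by
    conv_lhs => rw [← c.take_spec h]
    rw [walkVal_append]
  rw [hrot, hcv, mul_eq_one_iff_eq_inv, mul_eq_one_iff_inv_eq, eq_comm]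

end Helpers

/-- Lemma 13: given disjoint cycles `C₁` (Γ₁-non-zero) and `C₂` (Γ₂-non-zero) joined by
two disjoint `C₁`–`C₂`-paths, the union contains a `(Γ₁,Γ₂)`-non-zero cycle. -/
theorem nonzero_cycle_from_two_cycles_and_two_paths
    {V Γ₁ Γ₂ : Type} [Group Γ₁] [Group Γ₂] (G : SimpleGraph V)
    (γ : V → V → Γ₁ × Γ₂) (hγ : IsLab G γ)
    {a b x₁ y₁ x₂ y₂ : V}
    (C₁ : G.Walk a a) (C₂ : G.Walk b b) (P₁ : G.Walk x₁ y₁) (P₂ : G.Walk x₂ y₂)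
    (hC₁ : C₁.IsCycle) (hC₂ : C₂.IsCycle)
    (hCC : ∀ v : V, v ∈ C₁.support → v ∉ C₂.support)
    (hP₁ : P₁.IsPath) (hP₂ : P₂.IsPath)
    (hx₁ : x₁ ∈ C₁.support) (hy₁ : y₁ ∈ C₂.support)
    (hx₂ : x₂ ∈ C₁.support) (hy₂ : y₂ ∈ C₂.support)
    (hint₁ : ∀ z ∈ P₁.support, z ≠ x₁ → z ≠ y₁ → z ∉ C₁.support ∧ z ∉ C₂.support)
    (hint₂ : ∀ z ∈ P₂.support, z ≠ x₂ → z ≠ y₂ → z ∉ C₁.support ∧ z ∉ C₂.support)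
    (hPP : ∀ v : V, v ∈ P₁.support → v ∉ P₂.support)
    (h1 : walkVal (fun p q => (γ p q).1) C₁ ≠ 1)
    (h2 : walkVal (fun p q => (γ p q).2) C₂ ≠ 1) :
    ∃ (w : V) (D : G.Walk w w), D.IsCycle ∧ DNZ γ D ∧
      ∀ e ∈ D.edges, e ∈ C₁.edges ∨ e ∈ C₂.edges ∨ e ∈ P₁.edges ∨ e ∈ P₂.edges := by
  classical
  set γ1 : V → V → Γ₁ := fun p q => (γ p q).1 with hγ1def
  set γ2 : V → V → Γ₂ := fun p q => (γ p q).2 with hγ2def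
  have hLab1 : IsLab G γ1 := fun u v h => by
    simp only [hγ1def, hγ u v h, Prod.fst_inv]
  have hLab2 : IsLab G γ2 := fun u v h => by
    simp only [hγ2def, hγ u v h, Prod.snd_inv]
  by_cases hc12 : walkVal γ2 C₁ = 1
  case neg => exact ⟨a, C₁, hC₁, ⟨h1, hc12⟩, fun e he => Or.inl he⟩
  by_cases hc21 : walkVal γ1 C₂ = 1
  case neg => exact ⟨b, C₂, hC₂, ⟨hc21, h2⟩, fun e he => Or.inr (Or.inl he)⟩
  -- Main case.
  have hx12 : x₁ ≠ x₂ := fun h => hPP x₁ P₁.start_mem_support (h ▸ P₂.start_mem_support)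
  have hy12 : y₁ ≠ y₂ := fun h => hPP y₁ P₁.end_mem_support (h ▸ P₂.end_mem_support)
  -- split C₁ at x₁, x₂
  have hC₁' : (C₁.rotate x₁ hx₁).IsCycle := hC₁.rotate hx₁
  have hx₂' : x₂ ∈ (C₁.rotate x₁ hx₁).support := (mem_support_rotate_iff hC₁ hx₁).2 hx₂
  obtain ⟨A, A', hA, hA', hAs, hA's, hAe, hA'e, hAval⟩ :=
    cycle_split hC₁' hx₂' (Ne.symm hx12)
  have hAsup : ∀ z ∈ A.support, z ∈ C₁.support :=
    fun z hz => (mem_support_rotate_iff hC₁ hx₁).1 (hAs z hz)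
  have hA'sup : ∀ z ∈ A'.support, z ∈ C₁.support :=
    fun z hz => (mem_support_rotate_iff hC₁ hx₁).1 (hA's z hz)
  have hAedge : ∀ e ∈ A.edges, e ∈ C₁.edges :=
    fun e he => (Walk.rotate_edges C₁ x₁ hx₁).perm.mem_iff.1 (hAe e he)
  have hA'edge : ∀ e ∈ A'.edges, e ∈ C₁.edges :=
    fun e he => (Walk.rotate_edges C₁ x₁ hx₁).perm.mem_iff.1 (hA'e e he)
  -- split C₂ at y₂, y₁
  have hC₂' : (C₂.rotate y₂ hy₂).IsCycle := hC₂.rotate hy₂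
  have hy₁' : y₁ ∈ (C₂.rotate y₂ hy₂).support := (mem_support_rotate_iff hC₂ hy₂).2 hy₁
  obtain ⟨B, B', hB, hB', hBs, hB's, hBe, hB'e, hBval⟩ :=
    cycle_split hC₂' hy₁' hy12
  have hBsup : ∀ z ∈ B.support, z ∈ C₂.support :=
    fun z hz => (mem_support_rotate_iff hC₂ hy₂).1 (hBs z hz)
  have hB'sup : ∀ z ∈ B'.support, z ∈ C₂.support :=
    fun z hz => (mem_support_rotate_iff hC₂ hy₂).1 (hB's z hz)
  have hBedge : ∀ e ∈ B.edges, e ∈ C₂.edges :=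
    fun e he => (Walk.rotate_edges C₂ y₂ hy₂).perm.mem_iff.1 (hBe e he)
  have hB'edge : ∀ e ∈ B'.edges, e ∈ C₂.edges :=
    fun e he => (Walk.rotate_edges C₂ y₂ hy₂).perm.mem_iff.1 (hB'e e he)
  -- value facts
  have hA1 : walkVal γ1 A * walkVal γ1 A' ≠ 1 := by
    rw [hAval Γ₁ γ1]
    exact fun h => h1 ((rotate_val_one_iff C₁ hx₁ γ1).1 h)
  have hA2 : walkVal γ2 A * walkVal γ2 A' = 1 := by
    rw [hAval Γ₂ γ2]
    exact (rotate_val_one_iff C₁ hx₁ γ2).2 hc12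
  have hB1 : walkVal γ1 B * walkVal γ1 B' = 1 := by
    rw [hBval Γ₁ γ1]
    exact (rotate_val_one_iff C₂ hy₂ γ1).2 hc21
  have hB2 : walkVal γ2 B * walkVal γ2 B' ≠ 1 := by
    rw [hBval Γ₂ γ2]
    exact fun h => h2 ((rotate_val_one_iff C₂ hy₂ γ2).1 h)
  -- choose S
  obtain ⟨S, hS, hSsup, hSedge, hSval1, hSval2⟩ :
      ∃ S : G.Walk x₁ x₂, S.IsPath ∧ (∀ z ∈ S.support, z ∈ C₁.support) ∧
        (∀ e ∈ S.edges, e ∈ C₁.edges) ∧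
        walkVal γ1 S * (walkVal γ1 P₂ * (walkVal γ1 B * (walkVal γ1 P₁)⁻¹)) ≠ 1 ∧
        walkVal γ2 S = walkVal γ2 A := by
    by_cases hch : walkVal γ1 A * (walkVal γ1 P₂ * (walkVal γ1 B * (walkVal γ1 P₁)⁻¹)) = 1
    · refine ⟨A'.reverse, hA'.reverse, ?_, ?_, ?_, ?_⟩
      · intro z hz
        rw [Walk.support_reverse, List.mem_reverse] at hz
        exact hA'sup z hz
      · intro e he
        rw [Walk.edges_reverse, List.mem_reverse] at he
        exact hA'edge e he
      · rw [walkVal_reverse γ1 hLab1]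
        intro hcon
        apply hA1
        have e1 := mul_eq_one_iff_eq_inv.mp hch
        have e2 := mul_eq_one_iff_eq_inv.mp hcon
        have e3 : walkVal γ1 A = (walkVal γ1 A')⁻¹ := e1.trans e2.symm
        rw [e3, inv_mul_cancel]
      · rw [walkVal_reverse γ2 hLab2]
        exact inv_eq_of_mul_eq_one_left hA2
    · exact ⟨A, hA, hAsup, hAedge, hch, rfl⟩
  -- choose T
  obtain ⟨T, hT, hTsup, hTedge, hTval1, hTval2⟩ :
      ∃ T : G.Walk y₂ y₁, T.IsPath ∧ (∀ z ∈ T.support, z ∈ C₂.support) ∧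
        (∀ e ∈ T.edges, e ∈ C₂.edges) ∧
        walkVal γ1 T = walkVal γ1 B ∧
        walkVal γ2 A * (walkVal γ2 P₂ * (walkVal γ2 T * (walkVal γ2 P₁)⁻¹)) ≠ 1 := by
    by_cases hch : walkVal γ2 A * (walkVal γ2 P₂ * (walkVal γ2 B * (walkVal γ2 P₁)⁻¹)) = 1
    · refine ⟨B'.reverse, hB'.reverse, ?_, ?_, ?_, ?_⟩
      · intro z hz
        rw [Walk.support_reverse, List.mem_reverse] at hz
        exact hB'sup z hz
      · intro e he
        rw [Walk.edges_reverse, List.mem_reverse] at he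
        exact hB'edge e he
      · rw [walkVal_reverse γ1 hLab1]
        exact inv_eq_of_mul_eq_one_left hB1
      · rw [walkVal_reverse γ2 hLab2]
        intro hcon
        apply hB2
        have e1 := eq_inv_of_mul_eq_one_right hch
        have e2 := eq_inv_of_mul_eq_one_right hcon
        have e3 := e1.trans e2.symm
        have e4 := mul_left_cancel e3
        have e5 := mul_right_cancel e4
        rw [e5, inv_mul_cancel]
    · exact ⟨B, hB, hBsup, hBedge, rfl, hch⟩
  -- assemble the cycle
  have hR1 : (T.append P₁.reverse).IsPath := by
    refine isPath_append_of_meet hT hP₁.reverse ?_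
    intro x hxT hxP
    rw [Walk.support_reverse, List.mem_reverse] at hxP
    have hxC2 : x ∈ C₂.support := hTsup x hxT
    by_contra hne
    by_cases hx1 : x = x₁
    · subst hx1
      exact hCC x hx₁ hxC2
    · exact (hint₁ x hxP hx1 hne).2 hxC2
  have hR2 : (P₂.append (T.append P₁.reverse)).IsPath := by
    refine isPath_append_of_meet hP₂ hR1 ?_
    intro x hxP2 hxR
    rw [Walk.mem_support_append_iff] at hxR
    rcases hxR with hxT | hxP
    · have hxC2 : x ∈ C₂.support := hTsup x hxT
      by_contra hne
      by_cases hx2 : x = x₂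
      · subst hx2
        exact hCC x hx₂ hxC2
      · exact (hint₂ x hxP2 hx2 hne).2 hxC2
    · rw [Walk.support_reverse, List.mem_reverse] at hxP
      exact absurd hxP2 (hPP x hxP)
  have hmeetD : ∀ x, x ∈ S.support → x ∈ (P₂.append (T.append P₁.reverse)).support →
      x = x₁ ∨ x = x₂ := by
    intro x hxS hxR
    have hxC1 : x ∈ C₁.support := hSsup x hxS
    rw [Walk.mem_support_append_iff] at hxR
    rcases hxR with hxP2 | hxR
    · right
      by_contra hx2
      by_cases hy2 : x = y₂
      · subst hy2
        exact hCC x hxC1 hy₂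
      · exact (hint₂ x hxP2 hx2 hy2).1 hxC1
    · rw [Walk.mem_support_append_iff] at hxR
      rcases hxR with hxT | hxP
      · exact absurd (hTsup x hxT) (hCC x hxC1)
      · left
        rw [Walk.support_reverse, List.mem_reverse] at hxP
        by_contra hx1
        by_cases hy1 : x = y₁
        · subst hy1
          exact hCC x hxC1 hy₁
        · exact (hint₁ x hxP hx1 hy1).1 hxC1
  have hedgeD : ∀ e, e ∈ S.edges → e ∉ (P₂.append (T.append P₁.reverse)).edges := by
    have hmain : s(x₁, x₂) ∉ (P₂.append (T.append P₁.reverse)).edges := by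
      intro hmem
      rw [Walk.edges_append, List.mem_append, Walk.edges_append, List.mem_append] at hmem
      rcases hmem with h' | h' | h'
      · exact hPP x₁ P₁.start_mem_support (P₂.fst_mem_support_of_mem_edges h')
      · exact hCC x₁ hx₁ (hTsup _ (T.fst_mem_support_of_mem_edges h'))
      · rw [Walk.edges_reverse, List.mem_reverse] at h'
        exact hPP x₂ (P₁.snd_mem_support_of_mem_edges h') P₂.start_mem_support
    intro e heS heR
    induction e using Sym2.ind with
    | _ c d =>
      have hcd : c ≠ d := (G.mem_edgeSet.1 (S.edges_subset_edgeSet heS)).ne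
      have hcS : c ∈ S.support := S.fst_mem_support_of_mem_edges heS
      have hdS : d ∈ S.support := S.snd_mem_support_of_mem_edges heS
      have hcR : c ∈ (P₂.append (T.append P₁.reverse)).support :=
        Walk.fst_mem_support_of_mem_edges _ heR
      have hdR : d ∈ (P₂.append (T.append P₁.reverse)).support :=
        Walk.snd_mem_support_of_mem_edges _ heR
      rcases hmeetD c hcS hcR with rfl | rfl
      · rcases hmeetD d hdS hdR with rfl | rfl
        · exact hcd rfl
        · exact hmain heR
      · rcases hmeetD d hdS hdR with rfl | rfl
        · rw [Sym2.eq_swap] at heR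
          exact hmain heR
        · exact hcd rfl
  have hDcyc : (S.append (P₂.append (T.append P₁.reverse))).IsCycle :=
    isCycle_append_of_meet hS hR2 hx12 hmeetD hedgeD
  refine ⟨x₁, S.append (P₂.append (T.append P₁.reverse)), hDcyc, ⟨?_, ?_⟩, ?_⟩
  · show walkVal γ1 _ ≠ 1
    rw [walkVal_append, walkVal_append, walkVal_append, walkVal_reverse γ1 hLab1, hTval1]
    exact hSval1
  · show walkVal γ2 _ ≠ 1
    rw [walkVal_append, walkVal_append, walkVal_append, walkVal_reverse γ2 hLab2, hSval2]
    exact hTval2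
  · intro e he
    rw [Walk.edges_append, List.mem_append, Walk.edges_append, List.mem_append,
      Walk.edges_append, List.mem_append] at he
    rcases he with h' | h' | h' | h'
    · exact Or.inl (hSedge e h')
    · exact Or.inr (Or.inr (Or.inr h'))
    · exact Or.inr (Or.inl (hTedge e h'))
    · rw [Walk.edges_reverse, List.mem_reverse] at h'
      exact Or.inr (Or.inr (Or.inl h'))
end

section
/- Let Γ₁ and Γ₂ be groups, (G,γ) a (Γ₁⊕Γ₂)-labeled simple graph, and C, C₁, C₂ pairwise vertex-disjoint cycles of G. Let P₁, P₁', P₂, P₂' be pairwise vertex-disjoint paths such that for each i ∈ {1,2}, Pᵢ and Pᵢ' are C–Cᵢ-paths (one end on C, the other on Cᵢ, internally disjoint from C ∪ C₁ ∪ C₂) with V(Pᵢ) ∩ V(C₃₋ᵢ) = ∅ and V(Pᵢ') ∩ V(C₃₋ᵢ) = ∅. Let p₁, p₁', p₂, p₂' be the ends of P₁, P₁', P₂, P₂' on C, and assume these four vertices occur in this cyclic order on C. Assume C₁ is Γ₁-non-zero and Γ₂-zero, and C₂ is Γ₂-non-zero. Let I₁ be the subpath of C with ends p₁ and p₂' that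 does not contain p₂, and let I₂ be the subpath of C with ends p₁' and p₂ that does not contain p₁. Then there is a (Γ₁,Γ₂)-non-zero cycle D contained in C ∪ C₁ ∪ C₂ ∪ P₁ ∪ P₁' ∪ P₂ ∪ P₂' that contains I₁ ∪ I₂. -/
open SimpleGraph

set_option linter.unusedSectionVars false
set_option linter.unnecessarySimpa false
namespace NZB
variable {V Γ : Type} [DecidableEq V] [Group Γ] {G : SimpleGraph V}

lemma walkVal_append (γ : V → V → Γ) {u v w : V} (p : G.Walk u v) (q : G.Walk v w) :
    walkVal γ (p.append q) = walkVal γ p * walkVal γ q := by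
  simp [walkVal, SimpleGraph.Walk.darts_append]

lemma walkVal_reverse (γ : V → V → Γ) (hγ : IsLab G γ) {u v : V} (p : G.Walk u v) :
    walkVal γ p.reverse = (walkVal γ p)⁻¹ := by
  induction p with
  | nil => simp [walkVal]
  | @cons a b c h p ih =>
    rw [Walk.reverse_cons, walkVal_append, ih]
    simp [walkVal, hγ a b h]

lemma walkVal_take_drop (γ : V → V → Γ) {u v w : V} (p : G.Walk v w) (h : u ∈ p.support) :
    walkVal γ (p.takeUntil u h) * walkVal γ (p.dropUntil u h) = walkVal γ p := by
  conv_rhs => rw [← p.take_spec h]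
  rw [walkVal_append]

lemma walkVal_rotate (γ : V → V → Γ) {u v : V} (c : G.Walk v v) (h : u ∈ c.support) :
    walkVal γ (c.rotate u h)
      = (walkVal γ (c.takeUntil u h))⁻¹ * walkVal γ c * walkVal γ (c.takeUntil u h) := by
  rw [← walkVal_take_drop γ c h]
  unfold Walk.rotate
  rw [walkVal_append]
  group

lemma walkVal_rotate_ne_one (γ : V → V → Γ) {u v : V} {c : G.Walk v v} (h : u ∈ c.support)
    (hc : walkVal γ c ≠ 1) : walkVal γ (c.rotate u h) ≠ 1 := by
  rw [walkVal_rotate]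
  intro hh
  apply hc
  have := congrArg (fun x => walkVal γ (c.takeUntil u h) * x * (walkVal γ (c.takeUntil u h))⁻¹) hh
  simpa [mul_assoc] using this

lemma walkVal_rotate_eq_one (γ : V → V → Γ) {u v : V} {c : G.Walk v v} (h : u ∈ c.support)
    (hc : walkVal γ c = 1) : walkVal γ (c.rotate u h) = 1 := by
  rw [walkVal_rotate γ c h, hc]
  group

lemma end_mem_tail {u v : V} (p : G.Walk u v) (h : ¬ p.Nil) : v ∈ p.support.tail := by
  cases p with
  | nil => simp at h
  | cons h' p => simpa using p.end_mem_support

lemma end_mem_tail_of_length {u v : V} (p : G.Walk u v) (h : 1 ≤ p.length) :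
    v ∈ p.support.tail :=
  end_mem_tail p (by rw [Walk.not_nil_iff_lt_length]; omega)

lemma end_mem_tail_of_ne {u v : V} (p : G.Walk u v) (h : u ≠ v) : v ∈ p.support.tail := by
  cases p with
  | nil => exact absurd rfl h
  | cons h' p => simpa using p.end_mem_support

lemma mem_rotate_support {u v : V} {c : G.Walk v v} (hc : ¬ c.Nil) (h : u ∈ c.support) (x : V) :
    x ∈ (c.rotate u h).support ↔ x ∈ c.support := by
  have hr := (Walk.support_rotate c u h).mem_iff (a := x)
  constructor
  · intro hx
    rw [Walk.support_eq_cons] at hx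
    rcases List.mem_cons.1 hx with rfl | hx
    · exact h
    · exact List.mem_of_mem_tail (hr.1 hx)
  · intro hx
    rw [Walk.support_eq_cons] at hx
    rcases List.mem_cons.1 hx with rfl | hx
    · exact List.mem_of_mem_tail (hr.2 (end_mem_tail c hc))
    · exact List.mem_of_mem_tail (hr.2 hx)

end NZB

section
open NZB Walk
variable {V Γ : Type} [DecidableEq V] [Group Γ] {G : SimpleGraph V}

namespace NZB

lemma adj_ne_of_mem_edges {u v a b : V} {p : G.Walk u v} (h : s(a,b) ∈ p.edges) : a ≠ b := by
  have := p.adj_of_mem_edges h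
  exact this.ne

lemma edges_disj {a b c d x : V} {p : G.Walk a b} {q : G.Walk c d}
    (h : ∀ v, v ∈ p.support → v ∈ q.support → v = x) :
    ∀ e ∈ p.edges, e ∉ q.edges := by
  intro e he1 he2
  induction e with
  | h u w =>
    have hu : u = x := h u (p.fst_mem_support_of_mem_edges he1) (q.fst_mem_support_of_mem_edges he2)
    have hw : w = x := h w (p.snd_mem_support_of_mem_edges he1) (q.snd_mem_support_of_mem_edges he2)
    exact adj_ne_of_mem_edges he1 (hu.trans hw.symm)

lemma edges_disj_empty {a b c d : V} {p : G.Walk a b} {q : G.Walk c d}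
    (h : ∀ v, v ∈ p.support → v ∉ q.support) :
    ∀ e ∈ p.edges, e ∉ q.edges := by
  intro e he1 he2
  induction e with
  | h u w =>
    exact h u (p.fst_mem_support_of_mem_edges he1) (q.fst_mem_support_of_mem_edges he2)

lemma tail_disj_right {a b c d : V} {p : G.Walk a b} {q : G.Walk c d} (hq : q.IsPath)
    (h : ∀ v, v ∈ p.support → v ∈ q.support → v = c) :
    ∀ v ∈ p.support.tail, v ∉ q.support.tail := by
  intro v hv hv'
  have hvc : v = c := h v (List.mem_of_mem_tail hv) (List.mem_of_mem_tail hv')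
  subst hvc
  have := hq.support_nodup
  rw [q.support_eq_cons] at this
  exact this.notMem hv'

lemma tail_disj_left {a b c d : V} {p : G.Walk a b} {q : G.Walk c d} (hp : p.IsPath)
    (h : ∀ v, v ∈ p.support → v ∈ q.support → v = a) :
    ∀ v ∈ p.support.tail, v ∉ q.support.tail := by
  intro v hv hv'
  have hvc : v = a := h v (List.mem_of_mem_tail hv) (List.mem_of_mem_tail hv')
  subst hvc
  have := hp.support_nodup
  rw [p.support_eq_cons] at this
  exact this.notMem hv

lemma tail_disj_empty {a b c d : V} {p : G.Walk a b} {q : G.Walk c d}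
    (h : ∀ v, v ∈ p.support → v ∉ q.support) :
    ∀ v ∈ p.support.tail, v ∉ q.support.tail := fun v hv hv' =>
  h v (List.mem_of_mem_tail hv) (List.mem_of_mem_tail hv')

lemma cycle_split {q x : V} {W : G.Walk q q} (hW : W.IsCycle) (hx : x ∈ W.support) (hxq : x ≠ q) :
    (W.takeUntil x hx).IsPath ∧ (W.dropUntil x hx).IsPath ∧
      (∀ v, v ∈ (W.takeUntil x hx).support → v ∈ (W.dropUntil x hx).support → v = q ∨ v = x) := by
  set T := W.takeUntil x hx with hT
  set D := W.dropUntil x hx with hD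
  have hspec : T.append D = W := W.take_spec hx
  have htail : W.support.tail = T.support.tail ++ D.support.tail := by
    rw [← hspec, Walk.tail_support_append]
  have hnd : (T.support.tail ++ D.support.tail).Nodup := htail ▸ hW.2
  rw [List.nodup_append] at hnd
  obtain ⟨hnd1, hnd2, hdisj⟩ := hnd
  have hxT : x ∈ T.support.tail := end_mem_tail_of_ne T (Ne.symm hxq)
  have hqD : q ∈ D.support.tail := end_mem_tail_of_ne D hxq
  have hTpath : T.IsPath := by
    refine ⟨hW.isTrail.takeUntil hx, ?_⟩
    rw [T.support_eq_cons]
    exact List.nodup_cons.2 ⟨fun hq' => hdisj _ hq' _ hqD rfl, hnd1⟩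
  have hDpath : D.IsPath := by
    refine ⟨hW.isTrail.dropUntil hx, ?_⟩
    rw [D.support_eq_cons]
    exact List.nodup_cons.2 ⟨fun hx' => hdisj _ hxT _ hx' rfl, hnd2⟩
  refine ⟨hTpath, hDpath, fun v hv1 hv2 => ?_⟩
  rw [T.support_eq_cons, List.mem_cons] at hv1
  rw [D.support_eq_cons, List.mem_cons] at hv2
  rcases hv1 with rfl | hv1
  · exact Or.inl rfl
  rcases hv2 with rfl | hv2
  · exact Or.inr rfl
  exact absurd rfl (hdisj _ hv1 _ hv2)

/-- Two internally disjoint arcs between two vertices of a cycle. -/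
lemma arcs {q x : V} {W : G.Walk q q} (hW : W.IsCycle) (hx : x ∈ W.support) (hxq : x ≠ q) :
    ∃ R R' : G.Walk q x, R.IsPath ∧ R'.IsPath ∧
      (∀ v ∈ R.support, v ∈ W.support) ∧ (∀ v ∈ R'.support, v ∈ W.support) ∧
      (∀ e ∈ R.edges, e ∈ W.edges) ∧ (∀ e ∈ R'.edges, e ∈ W.edges) ∧
      (∀ (Γ' : Type) (_ : Group Γ') (γ' : V → V → Γ'), IsLab G γ' →
        walkVal γ' R' = (walkVal γ' W)⁻¹ * walkVal γ' R) := by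
  obtain ⟨hT, hD, _⟩ := cycle_split hW hx hxq
  refine ⟨W.takeUntil x hx, (W.dropUntil x hx).reverse, hT, hD.reverse, ?_, ?_, ?_, ?_, ?_⟩
  · exact fun v hv => W.support_takeUntil_subset hx hv
  · intro v hv
    rw [Walk.support_reverse, List.mem_reverse] at hv
    exact W.support_dropUntil_subset hx hv
  · exact fun e he => W.edges_takeUntil_subset hx he
  · intro e he
    rw [Walk.edges_reverse, List.mem_reverse] at he
    exact W.edges_dropUntil_subset hx he
  · intro Γ' hg γ' hγ'
    rw [walkVal_reverse γ' hγ']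
    have := walkVal_take_drop γ' W hx
    rw [← this]
    group

end NZB
end

namespace NZB
variable {V Γ : Type} [DecidableEq V] [Group Γ] {G : SimpleGraph V}

/-- assembling the big closed walk from eight pieces -/
def mkD {p₁ p₁' p₂ p₂' q₁ q₁' q₂ q₂' : V} {G : SimpleGraph V}
    (Q₄ : G.Walk p₂' p₁) (P₁ : G.Walk p₁ q₁) (R₁ : G.Walk q₁ q₁') (P₁' : G.Walk p₁' q₁')
    (Q₂ : G.Walk p₁' p₂) (P₂ : G.Walk p₂ q₂) (R₂ : G.Walk q₂ q₂') (P₂' : G.Walk p₂' q₂') :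
    G.Walk p₂' p₂' :=
  Q₄.append (P₁.append (R₁.append (P₁'.reverse.append
    (Q₂.append (P₂.append (R₂.append P₂'.reverse))))))

variable {p₁ p₁' p₂ p₂' q₁ q₁' q₂ q₂' : V}
  {Q₄ : G.Walk p₂' p₁} {P₁ : G.Walk p₁ q₁} {R₁ : G.Walk q₁ q₁'} {P₁' : G.Walk p₁' q₁'}
  {Q₂ : G.Walk p₁' p₂} {P₂ : G.Walk p₂ q₂} {R₂ : G.Walk q₂ q₂'} {P₂' : G.Walk p₂' q₂'}

lemma mkD_tail :
    (mkD Q₄ P₁ R₁ P₁' Q₂ P₂ R₂ P₂').support.tail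
      = Q₄.support.tail ++ (P₁.support.tail ++ (R₁.support.tail ++ (P₁'.reverse.support.tail ++
        (Q₂.support.tail ++ (P₂.support.tail ++ (R₂.support.tail ++ P₂'.reverse.support.tail)))))) := by
  simp [mkD, Walk.tail_support_append]

lemma mkD_edges :
    (mkD Q₄ P₁ R₁ P₁' Q₂ P₂ R₂ P₂').edges
      = Q₄.edges ++ (P₁.edges ++ (R₁.edges ++ (P₁'.reverse.edges ++
        (Q₂.edges ++ (P₂.edges ++ (R₂.edges ++ P₂'.reverse.edges)))))) := by
  simp [mkD, Walk.edges_append]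

lemma mkD_val (γ : V → V → Γ) (hγ : IsLab G γ) :
    walkVal γ (mkD Q₄ P₁ R₁ P₁' Q₂ P₂ R₂ P₂')
      = walkVal γ Q₄ * (walkVal γ P₁ * (walkVal γ R₁ * ((walkVal γ P₁')⁻¹ *
        (walkVal γ Q₂ * (walkVal γ P₂ * (walkVal γ R₂ * (walkVal γ P₂')⁻¹)))))) := by
  simp [mkD, walkVal_append, walkVal_reverse _ hγ]

lemma mkD_ne_nil (h : 1 ≤ Q₄.length) : mkD Q₄ P₁ R₁ P₁' Q₂ P₂ R₂ P₂' ≠ Walk.nil := by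
  intro hnil
  have := congrArg Walk.length hnil
  simp only [mkD, Walk.length_append, Walk.length_nil] at this
  omega

lemma path_tail_nodup {a b : V} {p : G.Walk a b} (hp : p.IsPath) : p.support.tail.Nodup := by
  have := hp.support_nodup
  rw [p.support_eq_cons] at this
  exact (List.nodup_cons.1 this).2

end NZB

open NZB

/-- Lemma 14 (non-zero brick).  The cycle `C` is presented as the concatenation of four
segments `Q₁ : p₁ → p₁'`, `Q₂ : p₁' → p₂`, `Q₃ : p₂ → p₂'`, `Q₄ : p₂' → p₁`, each with at
least one edge, so that `p₁, p₁', p₂, p₂'` occur in this cyclic order on `C`; the subpath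
`I₁` of `C` with ends `p₁, p₂'` avoiding `p₂` is `Q₄`, and the subpath `I₂` with ends
`p₁', p₂` avoiding `p₁` is `Q₂`.  Given pairwise disjoint cycles `C, C₁, C₂`, pairwise
disjoint connecting paths as below, with `C₁` being `Γ₁`-non-zero and `Γ₂`-zero and `C₂`
being `Γ₂`-non-zero, there is a `(Γ₁,Γ₂)`-non-zero cycle `D` inside the union that
contains `I₁ ∪ I₂`. -/
theorem nonzero_brick
    {V Γ₁ Γ₂ : Type} [Group Γ₁] [Group Γ₂] (G : SimpleGraph V)
    (γ : V → V → Γ₁ × Γ₂) (hγ : IsLab G γ)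
    {p₁ p₁' p₂ p₂' a₁ a₂ q₁ q₁' q₂ q₂' : V}
    (Q₁ : G.Walk p₁ p₁') (Q₂ : G.Walk p₁' p₂) (Q₃ : G.Walk p₂ p₂') (Q₄ : G.Walk p₂' p₁)
    (C₁ : G.Walk a₁ a₁) (C₂ : G.Walk a₂ a₂)
    (P₁ : G.Walk p₁ q₁) (P₁' : G.Walk p₁' q₁') (P₂ : G.Walk p₂ q₂) (P₂' : G.Walk p₂' q₂')
    -- `C` is a cycle composed of the four segments, each of positive length:
    (hC : (Q₁.append (Q₂.append (Q₃.append Q₄))).IsCycle)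
    (hQ₁ : 1 ≤ Q₁.length) (hQ₂ : 1 ≤ Q₂.length) (hQ₃ : 1 ≤ Q₃.length) (hQ₄ : 1 ≤ Q₄.length)
    (hC₁ : C₁.IsCycle) (hC₂ : C₂.IsCycle)
    -- the three cycles are pairwise vertex-disjoint:
    (hCC₁ : ∀ v : V, v ∈ (Q₁.append (Q₂.append (Q₃.append Q₄))).support → v ∉ C₁.support)
    (hCC₂ : ∀ v : V, v ∈ (Q₁.append (Q₂.append (Q₃.append Q₄))).support → v ∉ C₂.support)
    (hC₁C₂ : ∀ v : V, v ∈ C₁.support → v ∉ C₂.support)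
    -- the four connecting paths, with the prescribed ends:
    (hP₁ : P₁.IsPath) (hP₁' : P₁'.IsPath) (hP₂ : P₂.IsPath) (hP₂' : P₂'.IsPath)
    (hq₁ : q₁ ∈ C₁.support) (hq₁' : q₁' ∈ C₁.support)
    (hq₂ : q₂ ∈ C₂.support) (hq₂' : q₂' ∈ C₂.support)
    -- internal vertices of the connecting paths avoid all three cycles:
    (hi₁ : ∀ z ∈ P₁.support, z ≠ p₁ → z ≠ q₁ →
      z ∉ (Q₁.append (Q₂.append (Q₃.append Q₄))).support ∧ z ∉ C₁.support ∧ z ∉ C₂.support)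
    (hi₁' : ∀ z ∈ P₁'.support, z ≠ p₁' → z ≠ q₁' →
      z ∉ (Q₁.append (Q₂.append (Q₃.append Q₄))).support ∧ z ∉ C₁.support ∧ z ∉ C₂.support)
    (hi₂ : ∀ z ∈ P₂.support, z ≠ p₂ → z ≠ q₂ →
      z ∉ (Q₁.append (Q₂.append (Q₃.append Q₄))).support ∧ z ∉ C₁.support ∧ z ∉ C₂.support)
    (hi₂' : ∀ z ∈ P₂'.support, z ≠ p₂' → z ≠ q₂' →
      z ∉ (Q₁.append (Q₂.append (Q₃.append Q₄))).support ∧ z ∉ C₁.support ∧ z ∉ C₂.support)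
    -- the connecting paths avoid the opposite cycle entirely:
    (hv₁ : ∀ z ∈ P₁.support, z ∉ C₂.support) (hv₁' : ∀ z ∈ P₁'.support, z ∉ C₂.support)
    (hv₂ : ∀ z ∈ P₂.support, z ∉ C₁.support) (hv₂' : ∀ z ∈ P₂'.support, z ∉ C₁.support)
    -- the connecting paths are pairwise vertex-disjoint:
    (hd₁ : ∀ v : V, v ∈ P₁.support → v ∉ P₁'.support)
    (hd₂ : ∀ v : V, v ∈ P₁.support → v ∉ P₂.support)
    (hd₃ : ∀ v : V, v ∈ P₁.support → v ∉ P₂'.support)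
    (hd₄ : ∀ v : V, v ∈ P₁'.support → v ∉ P₂.support)
    (hd₅ : ∀ v : V, v ∈ P₁'.support → v ∉ P₂'.support)
    (hd₆ : ∀ v : V, v ∈ P₂.support → v ∉ P₂'.support)
    -- group-value hypotheses:
    (hC₁Γ₁ : walkVal (fun p q => (γ p q).1) C₁ ≠ 1)
    (hC₁Γ₂ : walkVal (fun p q => (γ p q).2) C₁ = 1)
    (hC₂Γ₂ : walkVal (fun p q => (γ p q).2) C₂ ≠ 1) :
    ∃ (w : V) (D : G.Walk w w), D.IsCycle ∧ DNZ γ D ∧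
      (∀ e ∈ D.edges,
        e ∈ Q₁.edges ∨ e ∈ Q₂.edges ∨ e ∈ Q₃.edges ∨ e ∈ Q₄.edges ∨
        e ∈ C₁.edges ∨ e ∈ C₂.edges ∨
        e ∈ P₁.edges ∨ e ∈ P₁'.edges ∨ e ∈ P₂.edges ∨ e ∈ P₂'.edges) ∧
      (∀ e ∈ Q₄.edges, e ∈ D.edges) ∧ (∀ e ∈ Q₂.edges, e ∈ D.edges) := by
  classical
  set γ₁ : V → V → Γ₁ := fun a b => (γ a b).1 with hγ₁def
  set γ₂ : V → V → Γ₂ := fun a b => (γ a b).2 with hγ₂def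
  have hγ₁ : IsLab G γ₁ := fun u v h => by simp [hγ₁def, hγ u v h]
  have hγ₂ : IsLab G γ₂ := fun u v h => by simp [hγ₂def, hγ u v h]
  set SC := Q₁.append (Q₂.append (Q₃.append Q₄)) with hSCdef
  -- the tail of the support of C decomposes
  have hCt : SC.support.tail
      = Q₁.support.tail ++ (Q₂.support.tail ++ (Q₃.support.tail ++ Q₄.support.tail)) := by
    simp [hSCdef, Walk.tail_support_append]
  have hN : (Q₁.support.tail ++ (Q₂.support.tail ++ (Q₃.support.tail ++ Q₄.support.tail))).Nodup := by
    rw [← hCt]; exact hC.support_nodup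
  rw [List.nodup_append, List.nodup_append, List.nodup_append] at hN
  obtain ⟨nd1, ⟨nd2, ⟨nd3, nd4, dj34⟩, dj2⟩, dj1⟩ := hN
  -- pairwise disjointness of the four tails
  have hd12 : ∀ v ∈ Q₁.support.tail, v ∉ Q₂.support.tail := fun v h1 h2 =>
    dj1 _ h1 _ (by simp [h2]) rfl
  have hd13 : ∀ v ∈ Q₁.support.tail, v ∉ Q₃.support.tail := fun v h1 h2 =>
    dj1 _ h1 _ (by simp [h2]) rfl
  have hd14 : ∀ v ∈ Q₁.support.tail, v ∉ Q₄.support.tail := fun v h1 h2 =>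
    dj1 _ h1 _ (by simp [h2]) rfl
  have hd23 : ∀ v ∈ Q₂.support.tail, v ∉ Q₃.support.tail := fun v h1 h2 =>
    dj2 _ h1 _ (by simp [h2]) rfl
  have hd24 : ∀ v ∈ Q₂.support.tail, v ∉ Q₄.support.tail := fun v h1 h2 =>
    dj2 _ h1 _ (by simp [h2]) rfl
  have hd34 : ∀ v ∈ Q₃.support.tail, v ∉ Q₄.support.tail := fun v h1 h2 => dj34 _ h1 _ h2 rfl
  -- the ends lie in the respective tails
  have hp₁'t : p₁' ∈ Q₁.support.tail := end_mem_tail_of_length Q₁ hQ₁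
  have hp₂t : p₂ ∈ Q₂.support.tail := end_mem_tail_of_length Q₂ hQ₂
  have hp₂'t : p₂' ∈ Q₃.support.tail := end_mem_tail_of_length Q₃ hQ₃
  have hp₁t : p₁ ∈ Q₄.support.tail := end_mem_tail_of_length Q₄ hQ₄
  -- distinctness of the four branch vertices
  have ne11' : p₁ ≠ p₁' := fun h => hd14 p₁' hp₁'t (h ▸ hp₁t)
  have ne12 : p₁ ≠ p₂ := fun h => hd24 p₂ hp₂t (h ▸ hp₁t)
  have ne12' : p₁ ≠ p₂' := fun h => hd34 p₂' hp₂'t (h ▸ hp₁t)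
  have ne1'2 : p₁' ≠ p₂ := fun h => hd12 p₁' hp₁'t (h ▸ hp₂t)
  have ne1'2' : p₁' ≠ p₂' := fun h => hd13 p₁' hp₁'t (h ▸ hp₂'t)
  have ne22' : p₂ ≠ p₂' := fun h => hd23 p₂ hp₂t (h ▸ hp₂'t)
  -- membership of tails in SC.support
  have hmemtail : ∀ v, v ∈ SC.support.tail → v ∈ SC.support := fun v h => List.mem_of_mem_tail h
  have hmem1 : ∀ v ∈ Q₁.support.tail, v ∈ SC.support := fun v h =>
    hmemtail v (by rw [hCt]; simp [h])
  have hmem2 : ∀ v ∈ Q₂.support.tail, v ∈ SC.support := fun v h =>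
    hmemtail v (by rw [hCt]; simp [h])
  have hmem3 : ∀ v ∈ Q₃.support.tail, v ∈ SC.support := fun v h =>
    hmemtail v (by rw [hCt]; simp [h])
  have hmem4 : ∀ v ∈ Q₄.support.tail, v ∈ SC.support := fun v h =>
    hmemtail v (by rw [hCt]; simp [h])
  have hp₁SC : p₁ ∈ SC.support := SC.start_mem_support
  have hp₁'SCm : p₁' ∈ SC.support := hmem1 _ hp₁'t
  have hp₂SCm : p₂ ∈ SC.support := hmem2 _ hp₂t
  have hp₂'SCm : p₂' ∈ SC.support := hmem3 _ hp₂'t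
  have hQ₄SC : ∀ v ∈ Q₄.support, v ∈ SC.support := by
    intro v hv
    rw [Q₄.support_eq_cons] at hv
    rcases List.mem_cons.1 hv with rfl | hv
    · exact hp₂'SCm
    · exact hmem4 v hv
  have hQ₂SC : ∀ v ∈ Q₂.support, v ∈ SC.support := by
    intro v hv
    rw [Q₂.support_eq_cons] at hv
    rcases List.mem_cons.1 hv with rfl | hv
    · exact hp₁'SCm
    · exact hmem2 v hv
  -- path/cycle intersections
  have hP₁SC : ∀ v ∈ P₁.support, v ∈ SC.support → v = p₁ := by
    intro v hv hvC
    by_cases h1 : v = p₁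
    · exact h1
    by_cases h2 : v = q₁
    · exact absurd (h2 ▸ hq₁) (hCC₁ v hvC)
    · exact absurd hvC (hi₁ v hv h1 h2).1
  have hP₁'SC : ∀ v ∈ P₁'.support, v ∈ SC.support → v = p₁' := by
    intro v hv hvC
    by_cases h1 : v = p₁'
    · exact h1
    by_cases h2 : v = q₁'
    · exact absurd (h2 ▸ hq₁') (hCC₁ v hvC)
    · exact absurd hvC (hi₁' v hv h1 h2).1
  have hP₂SC : ∀ v ∈ P₂.support, v ∈ SC.support → v = p₂ := by
    intro v hv hvC
    by_cases h1 : v = p₂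
    · exact h1
    by_cases h2 : v = q₂
    · exact absurd (h2 ▸ hq₂) (hCC₂ v hvC)
    · exact absurd hvC (hi₂ v hv h1 h2).1
  have hP₂'SC : ∀ v ∈ P₂'.support, v ∈ SC.support → v = p₂' := by
    intro v hv hvC
    by_cases h1 : v = p₂'
    · exact h1
    by_cases h2 : v = q₂'
    · exact absurd (h2 ▸ hq₂') (hCC₂ v hvC)
    · exact absurd hvC (hi₂' v hv h1 h2).1
  have hP₁C₁ : ∀ v ∈ P₁.support, v ∈ C₁.support → v = q₁ := by
    intro v hv hvC
    by_cases h2 : v = q₁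
    · exact h2
    by_cases h1 : v = p₁
    · exact absurd hvC (h1 ▸ hCC₁ p₁ hp₁SC)
    · exact absurd hvC (hi₁ v hv h1 h2).2.1
  have hP₁'C₁ : ∀ v ∈ P₁'.support, v ∈ C₁.support → v = q₁' := by
    intro v hv hvC
    by_cases h2 : v = q₁'
    · exact h2
    by_cases h1 : v = p₁'
    · exact absurd hvC (h1 ▸ hCC₁ p₁' hp₁'SCm)
    · exact absurd hvC (hi₁' v hv h1 h2).2.1
  have hP₂C₂ : ∀ v ∈ P₂.support, v ∈ C₂.support → v = q₂ := by
    intro v hv hvC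
    by_cases h2 : v = q₂
    · exact h2
    by_cases h1 : v = p₂
    · exact absurd hvC (h1 ▸ hCC₂ p₂ hp₂SCm)
    · exact absurd hvC (hi₂ v hv h1 h2).2.2
  have hP₂'C₂ : ∀ v ∈ P₂'.support, v ∈ C₂.support → v = q₂' := by
    intro v hv hvC
    by_cases h2 : v = q₂'
    · exact h2
    by_cases h1 : v = p₂'
    · exact absurd hvC (h1 ▸ hCC₂ p₂' hp₂'SCm)
    · exact absurd hvC (hi₂' v hv h1 h2).2.2
  -- the segments Q₂ and Q₄ are paths
  have hQ₄trail : Q₄.IsTrail :=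
    ((hC.isTrail.of_append_right).of_append_right).of_append_right
  have hQ₂trail : Q₂.IsTrail := (hC.isTrail.of_append_right).of_append_left
  have hp₂'n4 : p₂' ∉ Q₄.support.tail := fun h => hd34 p₂' hp₂'t h
  have hp₁'n2 : p₁' ∉ Q₂.support.tail := fun h => hd12 p₁' hp₁'t h
  have hQ₄path : Q₄.IsPath := by
    refine ⟨hQ₄trail, ?_⟩
    rw [Q₄.support_eq_cons]
    exact List.nodup_cons.2 ⟨hp₂'n4, nd4⟩
  have hQ₂path : Q₂.IsPath := by
    refine ⟨hQ₂trail, ?_⟩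
    rw [Q₂.support_eq_cons]
    exact List.nodup_cons.2 ⟨hp₁'n2, nd2⟩
  -- non-memberships of branch vertices in segments
  have hp₁'nQ₄ : p₁' ∉ Q₄.support := by
    rw [Q₄.support_eq_cons]
    intro h
    rcases List.mem_cons.1 h with h | h
    · exact ne1'2' h
    · exact hd14 p₁' hp₁'t h
  have hp₂nQ₄ : p₂ ∉ Q₄.support := by
    rw [Q₄.support_eq_cons]
    intro h
    rcases List.mem_cons.1 h with h | h
    · exact ne22' h
    · exact hd24 p₂ hp₂t h
  have hp₁nQ₂ : p₁ ∉ Q₂.support := by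
    rw [Q₂.support_eq_cons]
    intro h
    rcases List.mem_cons.1 h with h | h
    · exact ne11' h
    · exact (fun hh => hd24 p₁ hh hp₁t) h
  have hp₂'nQ₂ : p₂' ∉ Q₂.support := by
    rw [Q₂.support_eq_cons]
    intro h
    rcases List.mem_cons.1 h with h | h
    · exact ne1'2' h.symm
    · exact hd23 p₂' h hp₂'t
  have hQ₄Q₂ : ∀ v ∈ Q₄.support, v ∉ Q₂.support := by
    intro v hv hv'
    rw [Q₄.support_eq_cons] at hv
    rcases List.mem_cons.1 hv with rfl | hv
    · exact hp₂'nQ₂ hv'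
    rw [Q₂.support_eq_cons] at hv'
    rcases List.mem_cons.1 hv' with h | hv'
    · exact hd14 p₁' hp₁'t (h ▸ hv)
    · exact hd24 v hv' hv
  -- distinctness of attachment vertices on C₁, C₂
  have hq₁q₁' : q₁' ≠ q₁ := fun h =>
    hd₁ q₁ P₁.end_mem_support (by rw [← h]; exact P₁'.end_mem_support)
  have hq₂q₂' : q₂' ≠ q₂ := fun h =>
    hd₆ q₂ P₂.end_mem_support (by rw [← h]; exact P₂'.end_mem_support)
  -- rotate C₁ at q₁, C₂ at q₂, and split into arcs
  have hW₁cyc : (C₁.rotate q₁ hq₁).IsCycle := hC₁.rotate hq₁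
  have hW₂cyc : (C₂.rotate q₂ hq₂).IsCycle := hC₂.rotate hq₂
  have hW₁mem : ∀ x, x ∈ (C₁.rotate q₁ hq₁).support ↔ x ∈ C₁.support :=
    mem_rotate_support hC₁.not_nil hq₁
  have hW₂mem : ∀ x, x ∈ (C₂.rotate q₂ hq₂).support ↔ x ∈ C₂.support :=
    mem_rotate_support hC₂.not_nil hq₂
  have hq₁'W : q₁' ∈ (C₁.rotate q₁ hq₁).support := (hW₁mem q₁').2 hq₁'
  have hq₂'W : q₂' ∈ (C₂.rotate q₂ hq₂).support := (hW₂mem q₂').2 hq₂'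
  have hW₁e : ∀ e ∈ (C₁.rotate q₁ hq₁).edges, e ∈ C₁.edges := fun e he =>
    ((C₁.rotate_edges q₁ hq₁).mem_iff).1 he
  have hW₂e : ∀ e ∈ (C₂.rotate q₂ hq₂).edges, e ∈ C₂.edges := fun e he =>
    ((C₂.rotate_edges q₂ hq₂).mem_iff).1 he
  obtain ⟨R₁a, R₁b, hR₁a, hR₁b, hsa₁, hsb₁, hea₁, heb₁, hvalb₁⟩ := arcs hW₁cyc hq₁'W hq₁q₁'
  obtain ⟨R₂a, R₂b, hR₂a, hR₂b, hsa₂, hsb₂, hea₂, heb₂, hvalb₂⟩ := arcs hW₂cyc hq₂'W hq₂q₂'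
  have t1r : P₁'.reverse.IsPath := hP₁'.reverse
  have t4r : P₂'.reverse.IsPath := hP₂'.reverse
  have key : ∀ (R₁ : G.Walk q₁ q₁') (R₂ : G.Walk q₂ q₂'),
      R₁.IsPath → R₂.IsPath →
      (∀ v ∈ R₁.support, v ∈ C₁.support) → (∀ v ∈ R₂.support, v ∈ C₂.support) →
      (∀ e ∈ R₁.edges, e ∈ C₁.edges) → (∀ e ∈ R₂.edges, e ∈ C₂.edges) →
      (mkD Q₄ P₁ R₁ P₁' Q₂ P₂ R₂ P₂').IsCycle ∧
      (∀ e ∈ (mkD Q₄ P₁ R₁ P₁' Q₂ P₂ R₂ P₂').edges,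
        e ∈ Q₁.edges ∨ e ∈ Q₂.edges ∨ e ∈ Q₃.edges ∨ e ∈ Q₄.edges ∨
        e ∈ C₁.edges ∨ e ∈ C₂.edges ∨
        e ∈ P₁.edges ∨ e ∈ P₁'.edges ∨ e ∈ P₂.edges ∨ e ∈ P₂'.edges) ∧
      (∀ e ∈ Q₄.edges, e ∈ (mkD Q₄ P₁ R₁ P₁' Q₂ P₂ R₂ P₂').edges) ∧
      (∀ e ∈ Q₂.edges, e ∈ (mkD Q₄ P₁ R₁ P₁' Q₂ P₂ R₂ P₂').edges) := by
    intro R₁ R₂ hR₁ hR₂ hs1 hs2 he1 he2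
    have hrev1 : ∀ v : V, v ∈ P₁'.reverse.support ↔ v ∈ P₁'.support := by
      simp [Walk.support_reverse]
    have hrev2 : ∀ v : V, v ∈ P₂'.reverse.support ↔ v ∈ P₂'.support := by
      simp [Walk.support_reverse]
    -- all pairwise support intersection facts
    have I12 : ∀ v, v ∈ Q₄.support → v ∈ P₁.support → v = p₁ := fun v hv hv' =>
      hP₁SC v hv' (hQ₄SC v hv)
    have I13 : ∀ v ∈ Q₄.support, v ∉ R₁.support := fun v hv hv' =>
      hCC₁ v (hQ₄SC v hv) (hs1 v hv')
    have I14 : ∀ v ∈ Q₄.support, v ∉ P₁'.reverse.support := fun v hv hv' =>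
      hp₁'nQ₄ ((hP₁'SC v ((hrev1 v).1 hv') (hQ₄SC v hv)) ▸ hv)
    have I15 : ∀ v ∈ Q₄.support, v ∉ Q₂.support := hQ₄Q₂
    have I16 : ∀ v ∈ Q₄.support, v ∉ P₂.support := fun v hv hv' =>
      hp₂nQ₄ ((hP₂SC v hv' (hQ₄SC v hv)) ▸ hv)
    have I17 : ∀ v ∈ Q₄.support, v ∉ R₂.support := fun v hv hv' =>
      hCC₂ v (hQ₄SC v hv) (hs2 v hv')
    have I18 : ∀ v, v ∈ Q₄.support → v ∈ P₂'.reverse.support → v = p₂' := fun v hv hv' =>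
      hP₂'SC v ((hrev2 v).1 hv') (hQ₄SC v hv)
    have I23 : ∀ v, v ∈ P₁.support → v ∈ R₁.support → v = q₁ := fun v hv hv' =>
      hP₁C₁ v hv (hs1 v hv')
    have I24 : ∀ v ∈ P₁.support, v ∉ P₁'.reverse.support := fun v hv hv' =>
      hd₁ v hv ((hrev1 v).1 hv')
    have I25 : ∀ v ∈ P₁.support, v ∉ Q₂.support := fun v hv hv' =>
      hp₁nQ₂ ((hP₁SC v hv (hQ₂SC v hv')) ▸ hv')
    have I26 : ∀ v ∈ P₁.support, v ∉ P₂.support := hd₂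
    have I27 : ∀ v ∈ P₁.support, v ∉ R₂.support := fun v hv hv' =>
      hv₁ v hv (hs2 v hv')
    have I28 : ∀ v ∈ P₁.support, v ∉ P₂'.reverse.support := fun v hv hv' =>
      hd₃ v hv ((hrev2 v).1 hv')
    have I34 : ∀ v, v ∈ R₁.support → v ∈ P₁'.reverse.support → v = q₁' := fun v hv hv' =>
      hP₁'C₁ v ((hrev1 v).1 hv') (hs1 v hv)
    have I35 : ∀ v ∈ R₁.support, v ∉ Q₂.support := fun v hv hv' =>
      hCC₁ v (hQ₂SC v hv') (hs1 v hv)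
    have I36 : ∀ v ∈ R₁.support, v ∉ P₂.support := fun v hv hv' =>
      hv₂ v hv' (hs1 v hv)
    have I37 : ∀ v ∈ R₁.support, v ∉ R₂.support := fun v hv hv' =>
      hC₁C₂ v (hs1 v hv) (hs2 v hv')
    have I38 : ∀ v ∈ R₁.support, v ∉ P₂'.reverse.support := fun v hv hv' =>
      hv₂' v ((hrev2 v).1 hv') (hs1 v hv)
    have I45 : ∀ v, v ∈ P₁'.reverse.support → v ∈ Q₂.support → v = p₁' := fun v hv hv' =>
      hP₁'SC v ((hrev1 v).1 hv) (hQ₂SC v hv')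
    have I46 : ∀ v ∈ P₁'.reverse.support, v ∉ P₂.support := fun v hv hv' =>
      hd₄ v ((hrev1 v).1 hv) hv'
    have I47 : ∀ v ∈ P₁'.reverse.support, v ∉ R₂.support := fun v hv hv' =>
      hv₁' v ((hrev1 v).1 hv) (hs2 v hv')
    have I48 : ∀ v ∈ P₁'.reverse.support, v ∉ P₂'.reverse.support := fun v hv hv' =>
      hd₅ v ((hrev1 v).1 hv) ((hrev2 v).1 hv')
    have I56 : ∀ v, v ∈ Q₂.support → v ∈ P₂.support → v = p₂ := fun v hv hv' =>
      hP₂SC v hv' (hQ₂SC v hv)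
    have I57 : ∀ v ∈ Q₂.support, v ∉ R₂.support := fun v hv hv' =>
      hCC₂ v (hQ₂SC v hv) (hs2 v hv')
    have I58 : ∀ v ∈ Q₂.support, v ∉ P₂'.reverse.support := fun v hv hv' =>
      hp₂'nQ₂ ((hP₂'SC v ((hrev2 v).1 hv') (hQ₂SC v hv)) ▸ hv)
    have I67 : ∀ v, v ∈ P₂.support → v ∈ R₂.support → v = q₂ := fun v hv hv' =>
      hP₂C₂ v hv (hs2 v hv')
    have I68 : ∀ v ∈ P₂.support, v ∉ P₂'.reverse.support := fun v hv hv' =>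
      hd₆ v hv ((hrev2 v).1 hv')
    have I78 : ∀ v, v ∈ R₂.support → v ∈ P₂'.reverse.support → v = q₂' := fun v hv hv' =>
      hP₂'C₂ v ((hrev2 v).1 hv') (hs2 v hv)
    -- edges of the closed walk are nodup
    have hEnd : (mkD Q₄ P₁ R₁ P₁' Q₂ P₂ R₂ P₂').edges.Nodup := by
      rw [mkD_edges]
      simp only [List.nodup_append', List.disjoint_append_right]
      exact ⟨hQ₄trail.edges_nodup,
        ⟨hP₁.isTrail.edges_nodup,
          ⟨hR₁.isTrail.edges_nodup,
            ⟨t1r.isTrail.edges_nodup,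
              ⟨hQ₂trail.edges_nodup,
                ⟨hP₂.isTrail.edges_nodup,
                  ⟨hR₂.isTrail.edges_nodup, t4r.isTrail.edges_nodup,
                    List.disjoint_left.2 (edges_disj I78)⟩,
                  List.disjoint_left.2 (edges_disj I67),
                  List.disjoint_left.2 (edges_disj_empty I68)⟩,
                List.disjoint_left.2 (edges_disj I56),
                List.disjoint_left.2 (edges_disj_empty I57),
                List.disjoint_left.2 (edges_disj_empty I58)⟩,
              List.disjoint_left.2 (edges_disj I45),
              List.disjoint_left.2 (edges_disj_empty I46),
              List.disjoint_left.2 (edges_disj_empty I47),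
              List.disjoint_left.2 (edges_disj_empty I48)⟩,
            List.disjoint_left.2 (edges_disj I34),
            List.disjoint_left.2 (edges_disj_empty I35),
            List.disjoint_left.2 (edges_disj_empty I36),
            List.disjoint_left.2 (edges_disj_empty I37),
            List.disjoint_left.2 (edges_disj_empty I38)⟩,
          List.disjoint_left.2 (edges_disj I23),
          List.disjoint_left.2 (edges_disj_empty I24),
          List.disjoint_left.2 (edges_disj_empty I25),
          List.disjoint_left.2 (edges_disj_empty I26),
          List.disjoint_left.2 (edges_disj_empty I27),
          List.disjoint_left.2 (edges_disj_empty I28)⟩,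
        List.disjoint_left.2 (edges_disj I12),
        List.disjoint_left.2 (edges_disj_empty I13),
        List.disjoint_left.2 (edges_disj_empty I14),
        List.disjoint_left.2 (edges_disj_empty I15),
        List.disjoint_left.2 (edges_disj_empty I16),
        List.disjoint_left.2 (edges_disj_empty I17),
        List.disjoint_left.2 (edges_disj I18)⟩
    -- the support tail is nodup
    have hTnd : (mkD Q₄ P₁ R₁ P₁' Q₂ P₂ R₂ P₂').support.tail.Nodup := by
      rw [mkD_tail]
      simp only [List.nodup_append', List.disjoint_append_right]
      exact ⟨path_tail_nodup hQ₄path,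
        ⟨path_tail_nodup hP₁,
          ⟨path_tail_nodup hR₁,
            ⟨path_tail_nodup t1r,
              ⟨path_tail_nodup hQ₂path,
                ⟨path_tail_nodup hP₂,
                  ⟨path_tail_nodup hR₂, path_tail_nodup t4r,
                    List.disjoint_left.2 (tail_disj_right t4r I78)⟩,
                  List.disjoint_left.2 (tail_disj_right hR₂ I67),
                  List.disjoint_left.2 (tail_disj_empty I68)⟩,
                List.disjoint_left.2 (tail_disj_right hP₂ I56),
                List.disjoint_left.2 (tail_disj_empty I57),
                List.disjoint_left.2 (tail_disj_empty I58)⟩,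
              List.disjoint_left.2 (tail_disj_right hQ₂path I45),
              List.disjoint_left.2 (tail_disj_empty I46),
              List.disjoint_left.2 (tail_disj_empty I47),
              List.disjoint_left.2 (tail_disj_empty I48)⟩,
            List.disjoint_left.2 (tail_disj_right t1r I34),
            List.disjoint_left.2 (tail_disj_empty I35),
            List.disjoint_left.2 (tail_disj_empty I36),
            List.disjoint_left.2 (tail_disj_empty I37),
            List.disjoint_left.2 (tail_disj_empty I38)⟩,
          List.disjoint_left.2 (tail_disj_right hR₁ I23),
          List.disjoint_left.2 (tail_disj_empty I24),
          List.disjoint_left.2 (tail_disj_empty I25),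
          List.disjoint_left.2 (tail_disj_empty I26),
          List.disjoint_left.2 (tail_disj_empty I27),
          List.disjoint_left.2 (tail_disj_empty I28)⟩,
        List.disjoint_left.2 (tail_disj_right hP₁ I12),
        List.disjoint_left.2 (tail_disj_empty I13),
        List.disjoint_left.2 (tail_disj_empty I14),
        List.disjoint_left.2 (tail_disj_empty I15),
        List.disjoint_left.2 (tail_disj_empty I16),
        List.disjoint_left.2 (tail_disj_empty I17),
        List.disjoint_left.2 (tail_disj_left hQ₄path I18)⟩
    refine ⟨⟨⟨⟨hEnd⟩, mkD_ne_nil hQ₄⟩, hTnd⟩, ?_, ?_, ?_⟩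
    · intro e he
      rw [mkD_edges] at he
      simp only [List.mem_append] at he
      rcases he with h|h|h|h|h|h|h|h
      · exact Or.inr (Or.inr (Or.inr (Or.inl h)))
      · exact Or.inr (Or.inr (Or.inr (Or.inr (Or.inr (Or.inr (Or.inl h))))))
      · exact Or.inr (Or.inr (Or.inr (Or.inr (Or.inl (he1 e h)))))
      · rw [Walk.edges_reverse, List.mem_reverse] at h
        exact Or.inr (Or.inr (Or.inr (Or.inr (Or.inr (Or.inr (Or.inr (Or.inl h)))))))
      · exact Or.inr (Or.inl h)
      · exact Or.inr (Or.inr (Or.inr (Or.inr (Or.inr (Or.inr (Or.inr (Or.inr (Or.inl h))))))))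
      · exact Or.inr (Or.inr (Or.inr (Or.inr (Or.inr (Or.inl (he2 e h))))))
      · rw [Walk.edges_reverse, List.mem_reverse] at h
        exact Or.inr (Or.inr (Or.inr (Or.inr (Or.inr (Or.inr (Or.inr (Or.inr (Or.inr h))))))))
    · intro e he
      rw [mkD_edges]
      simp [List.mem_append, he]
    · intro e he
      rw [mkD_edges]
      simp [List.mem_append, he]
  -- group values of the rotated cycles
  have hw₁ne : walkVal γ₁ (C₁.rotate q₁ hq₁) ≠ 1 := walkVal_rotate_ne_one γ₁ hq₁ hC₁Γ₁
  have hw₁eq2 : walkVal γ₂ (C₁.rotate q₁ hq₁) = 1 := walkVal_rotate_eq_one γ₂ hq₁ hC₁Γ₂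
  have hw₂ne : walkVal γ₂ (C₂.rotate q₂ hq₂) ≠ 1 := walkVal_rotate_ne_one γ₂ hq₂ hC₂Γ₂
  have hb₁v1 : walkVal γ₁ R₁b = (walkVal γ₁ (C₁.rotate q₁ hq₁))⁻¹ * walkVal γ₁ R₁a :=
    hvalb₁ Γ₁ inferInstance γ₁ hγ₁
  have hb₁v2 : walkVal γ₂ R₁b = walkVal γ₂ R₁a := by
    rw [hvalb₁ Γ₂ inferInstance γ₂ hγ₂, hw₁eq2]; simp
  have hb₂v2 : walkVal γ₂ R₂b = (walkVal γ₂ (C₂.rotate q₂ hq₂))⁻¹ * walkVal γ₂ R₂a :=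
    hvalb₂ Γ₂ inferInstance γ₂ hγ₂
  -- supports and edges of the arcs, relative to C₁ and C₂
  have hsa₁' : ∀ v ∈ R₁a.support, v ∈ C₁.support := fun v h => (hW₁mem v).1 (hsa₁ v h)
  have hsb₁' : ∀ v ∈ R₁b.support, v ∈ C₁.support := fun v h => (hW₁mem v).1 (hsb₁ v h)
  have hsa₂' : ∀ v ∈ R₂a.support, v ∈ C₂.support := fun v h => (hW₂mem v).1 (hsa₂ v h)
  have hsb₂' : ∀ v ∈ R₂b.support, v ∈ C₂.support := fun v h => (hW₂mem v).1 (hsb₂ v h)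
  have hea₁' : ∀ e ∈ R₁a.edges, e ∈ C₁.edges := fun e h => hW₁e e (hea₁ e h)
  have heb₁' : ∀ e ∈ R₁b.edges, e ∈ C₁.edges := fun e h => hW₁e e (heb₁ e h)
  have hea₂' : ∀ e ∈ R₂a.edges, e ∈ C₂.edges := fun e h => hW₂e e (hea₂ e h)
  have heb₂' : ∀ e ∈ R₂b.edges, e ∈ C₂.edges := fun e h => hW₂e e (heb₂ e h)
  -- choose the C₂-arc so that the Γ₂-value is non-trivial
  obtain ⟨S₂, hS₂p, hS₂s, hS₂e, hS₂v⟩ :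
      ∃ S₂ : G.Walk q₂ q₂', S₂.IsPath ∧ (∀ v ∈ S₂.support, v ∈ C₂.support) ∧
        (∀ e ∈ S₂.edges, e ∈ C₂.edges) ∧
        walkVal γ₂ (mkD Q₄ P₁ R₁a P₁' Q₂ P₂ S₂ P₂') ≠ 1 := by
    by_cases hA : walkVal γ₂ (mkD Q₄ P₁ R₁a P₁' Q₂ P₂ R₂a P₂') = 1
    · refine ⟨R₂b, hR₂b, hsb₂', heb₂', ?_⟩
      intro hb
      rw [mkD_val γ₂ hγ₂] at hA hb
      rw [hb₂v2] at hb
      have h := hA.trans hb.symm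
      have h := mul_left_cancel h
      have h := mul_left_cancel h
      have h := mul_left_cancel h
      have h := mul_left_cancel h
      have h := mul_left_cancel h
      have h := mul_left_cancel h
      have h := mul_right_cancel h
      exact hw₂ne (inv_eq_one.1 (right_eq_mul.1 h))
    · exact ⟨R₂a, hR₂a, hsa₂', hea₂', hA⟩
  -- the Γ₂-value does not depend on the choice of C₁-arc
  have hswap : walkVal γ₂ (mkD Q₄ P₁ R₁b P₁' Q₂ P₂ S₂ P₂')
      = walkVal γ₂ (mkD Q₄ P₁ R₁a P₁' Q₂ P₂ S₂ P₂') := by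
    rw [mkD_val γ₂ hγ₂, mkD_val γ₂ hγ₂, hb₁v2]
  -- choose the C₁-arc so that the Γ₁-value is non-trivial
  obtain ⟨S₁, hS₁p, hS₁s, hS₁e, hS₁v1, hS₁v2⟩ :
      ∃ S₁ : G.Walk q₁ q₁', S₁.IsPath ∧ (∀ v ∈ S₁.support, v ∈ C₁.support) ∧
        (∀ e ∈ S₁.edges, e ∈ C₁.edges) ∧
        walkVal γ₁ (mkD Q₄ P₁ S₁ P₁' Q₂ P₂ S₂ P₂') ≠ 1 ∧
        walkVal γ₂ (mkD Q₄ P₁ S₁ P₁' Q₂ P₂ S₂ P₂') ≠ 1 := by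
    by_cases hB : walkVal γ₁ (mkD Q₄ P₁ R₁a P₁' Q₂ P₂ S₂ P₂') = 1
    · refine ⟨R₁b, hR₁b, hsb₁', heb₁', ?_, by rw [hswap]; exact hS₂v⟩
      intro hb
      rw [mkD_val γ₁ hγ₁] at hB hb
      rw [hb₁v1] at hb
      have h := hB.trans hb.symm
      have h := mul_left_cancel h
      have h := mul_left_cancel h
      have h := mul_right_cancel h
      exact hw₁ne (inv_eq_one.1 (right_eq_mul.1 h))
    · exact ⟨R₁a, hR₁a, hsa₁', hea₁', hB, hS₂v⟩
  obtain ⟨hcyc, hcover, hsub4, hsub2⟩ := key S₁ S₂ hS₁p hS₂p hS₁s hS₂s hS₁e hS₂e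
  exact ⟨p₂', mkD Q₄ P₁ S₁ P₁' Q₂ P₂ S₂ P₂', hcyc, ⟨hS₁v1, hS₁v2⟩, hcover, hsub4, hsub2⟩
end

section
/- Let t be a positive integer and L a linearly ordered set. Let ℱ be a family of t³ pairs (a,b) of elements of L with a < b, such that all 2t³ coordinates appearing in ℱ are pairwise distinct. Then ℱ contains a pure subfamily of size t, i.e., t pairs that are pairwise in series, or t pairs that are pairwise nested, or t pairs that are pairwise crossing. -/
open Finset

lemma mirsky {α : Type} [DecidableEq α] (r : α → α → Prop)
    (hirr : ∀ x, ¬ r x x) (htr : ∀ {x y z}, r x y → r y z → r x z)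
    (s : Finset α) (m n : ℕ) (hn : 0 < n) (hcard : (n - 1) * m < s.card) :
    (∃ c ⊆ s, n ≤ c.card ∧ ∀ x ∈ c, ∀ y ∈ c, x ≠ y → r x y ∨ r y x) ∨
    (∃ c ⊆ s, m ≤ c.card ∧ ∀ x ∈ c, ∀ y ∈ c, ¬ r x y) := by
  classical
  by_cases hch : ∃ c ⊆ s, n ≤ c.card ∧ ∀ x ∈ c, ∀ y ∈ c, x ≠ y → r x y ∨ r y x
  · exact Or.inl hch
  push_neg at hch
  have hsne : s.Nonempty := Finset.card_pos.mp (by omega)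
  rcases Nat.lt_or_ge n 2 with hn2 | hn2
  · -- n = 1 : a singleton is a chain
    interval_cases n
    obtain ⟨x, hx⟩ := hsne
    left
    refine ⟨{x}, by simpa using hx, by simp, ?_⟩
    intro a ha b hb hab
    simp only [mem_singleton] at ha hb
    exact absurd (ha.trans hb.symm) hab
  right
  set P : α → Finset α → Prop := fun x c =>
    x ∈ c ∧ (∀ y ∈ c, y = x ∨ r y x) ∧ ∀ y ∈ c, ∀ z ∈ c, y ≠ z → r y z ∨ r z y with hP
  set h : α → ℕ := fun x => ((s.powerset.filter (P x)).sup Finset.card) with hh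
  have hsingle : ∀ x ∈ s, P x {x} := by
    intro x hx
    refine ⟨by simp, ?_, ?_⟩
    · intro y hy; left; simpa using hy
    · intro y hy z hz hyz; simp only [mem_singleton] at hy hz
      exact absurd (hy.trans hz.symm) hyz
  have hmem : ∀ x ∈ s, {x} ∈ s.powerset.filter (P x) := by
    intro x hx
    rw [mem_filter, mem_powerset]
    exact ⟨by simpa using hx, hsingle x hx⟩
  have hattain : ∀ x ∈ s, ∃ c, c ⊆ s ∧ P x c ∧ c.card = h x := by
    intro x hx
    obtain ⟨c, hc, hc2⟩ := Finset.exists_mem_eq_sup (s.powerset.filter (P x))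
      ⟨{x}, hmem x hx⟩ Finset.card
    rw [mem_filter, mem_powerset] at hc
    exact ⟨c, hc.1, hc.2, hc2.symm⟩
  have hle : ∀ x, ∀ c, c ⊆ s → P x c → c.card ≤ h x := by
    intro x c hcs hc
    exact Finset.le_sup (f := Finset.card) (by rw [mem_filter, mem_powerset]; exact ⟨hcs, hc⟩)
  have hone : ∀ x ∈ s, 1 ≤ h x := by
    intro x hx
    have := hle x {x} (by simpa using hx) (hsingle x hx)
    simpa using this
  have hmono : ∀ x ∈ s, ∀ y ∈ s, r x y → h x < h y := by
    intro x hx y hy hxy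
    obtain ⟨c, hcs, ⟨hxc, hcx, hcc⟩, hcd⟩ := hattain x hx
    have hync : y ∉ c := by
      intro hyc
      rcases hcx y hyc with h | h
      · subst h; exact hirr y hxy
      · exact hirr y (htr h hxy)
    have : (insert y c).card ≤ h y := by
      apply hle y
      · exact Finset.insert_subset hy hcs
      · refine ⟨Finset.mem_insert_self _ _, ?_, ?_⟩
        · intro z hz
          rcases Finset.mem_insert.mp hz with h | h
          · exact Or.inl h
          · right
            rcases hcx z h with h' | h'
            · subst h'; exact hxy
            · exact htr h' hxy
        · intro a ha b hb hab
          rcases Finset.mem_insert.mp ha with ha' | ha' <;>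
            rcases Finset.mem_insert.mp hb with hb' | hb'
          · exact absurd (ha'.trans hb'.symm) hab
          · subst ha'
            right
            rcases hcx b hb' with h' | h'
            · subst h'; exact hxy
            · exact htr h' hxy
          · subst hb'
            left
            rcases hcx a ha' with h' | h'
            · subst h'; exact hxy
            · exact htr h' hxy
          · exact hcc a ha' b hb' hab
    rw [Finset.card_insert_of_notMem hync, hcd] at this
    omega
  have hbound : ∀ x ∈ s, h x ≤ n - 1 := by
    intro x hx
    obtain ⟨c, hcs, ⟨hxc, hcx, hcc⟩, hcd⟩ := hattain x hx
    by_contra hgt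
    push_neg at hgt
    obtain ⟨a, ha, b, hb, hab, hnr1, hnr2⟩ := hch c hcs (by omega)
    exact (hcc a ha b hb hab).elim hnr1 hnr2
  have hmaps : ∀ x ∈ s, h x ∈ Finset.Icc 1 (n - 1) := fun x hx =>
    Finset.mem_Icc.mpr ⟨hone x hx, hbound x hx⟩
  obtain ⟨b, _, hb⟩ := Finset.exists_le_card_fiber_of_mul_le_card_of_maps_to (n := m) hmaps
    ⟨1, Finset.mem_Icc.mpr ⟨le_refl 1, by omega⟩⟩
    (by rw [Nat.card_Icc, Nat.add_sub_cancel]; omega)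
  refine ⟨s.filter (fun a => h a = b), Finset.filter_subset _ _, hb, ?_⟩
  intro x hx y hy hr
  rw [Finset.mem_filter] at hx hy
  have := hmono x hx.1 y hy.1 hr
  omega

/-- Two pairs (with increasing coordinates) of a linear order are *in series*. -/
def InSeriesP {L : Type} [LinearOrder L] (p q : L × L) : Prop :=
  p.2 < q.1 ∨ q.2 < p.1

/-- Two pairs (with increasing coordinates) of a linear order are *nested*. -/
def NestedP {L : Type} [LinearOrder L] (p q : L × L) : Prop :=
  (p.1 < q.1 ∧ q.2 < p.2) ∨ (q.1 < p.1 ∧ p.2 < q.2)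

/-- Two pairs (with increasing coordinates) of a linear order are *crossing*. -/
def CrossingP {L : Type} [LinearOrder L] (p q : L × L) : Prop :=
  (p.1 < q.1 ∧ q.1 < p.2 ∧ p.2 < q.2) ∨ (q.1 < p.1 ∧ p.1 < q.2 ∧ q.2 < p.2)

/-- Lemma 15: every family of `t³` pairs of a linear order, with increasing coordinates
and all `2t³` coordinates pairwise distinct, contains a pure subfamily of size `t`:
`t` pairs pairwise in series, pairwise nested, or pairwise crossing. -/
theorem pure_subfamily_of_pairs
    {L : Type} [LinearOrder L] (t : ℕ) (ht : 0 < t)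
    (F : Fin (t ^ 3) → L × L)
    (hlt : ∀ i, (F i).1 < (F i).2)
    (hinj : Function.Injective fun x : Fin (t ^ 3) × Bool =>
      if x.2 then (F x.1).2 else (F x.1).1) :
    ∃ s : Finset (Fin (t ^ 3)), s.card = t ∧
      ((∀ i ∈ s, ∀ j ∈ s, i ≠ j → InSeriesP (F i) (F j)) ∨
       (∀ i ∈ s, ∀ j ∈ s, i ≠ j → NestedP (F i) (F j)) ∨
       (∀ i ∈ s, ∀ j ∈ s, i ≠ j → CrossingP (F i) (F j))) := by
  classical
  -- distinctness of coordinates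
  have hne1 : ∀ i j : Fin (t ^ 3), i ≠ j → (F i).1 ≠ (F j).1 := by
    intro i j hij h
    have : ((i, false) : Fin (t ^ 3) × Bool) = (j, false) := hinj (by simpa using h)
    exact hij (by simpa using congrArg Prod.fst this)
  have hne2 : ∀ i j : Fin (t ^ 3), i ≠ j → (F i).2 ≠ (F j).2 := by
    intro i j hij h
    have : ((i, true) : Fin (t ^ 3) × Bool) = (j, true) := hinj (by simpa using h)
    exact hij (by simpa using congrArg Prod.fst this)
  have hne12 : ∀ i j : Fin (t ^ 3), (F i).1 ≠ (F j).2 := by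
    intro i j h
    have : ((i, false) : Fin (t ^ 3) × Bool) = (j, true) := hinj (by simpa using h)
    simpa using congrArg Prod.snd this
  -- trichotomy
  have htri : ∀ i j : Fin (t ^ 3), i ≠ j →
      InSeriesP (F i) (F j) ∨ NestedP (F i) (F j) ∨ CrossingP (F i) (F j) := by
    intro i j hij
    have h1 := hlt i
    have h2 := hlt j
    have a1 := hne1 i j hij
    have a2 := hne2 i j hij
    have a3 := hne12 i j
    have a4 := hne12 j i
    unfold InSeriesP NestedP CrossingP
    rcases lt_or_gt_of_ne a1 with h | h
    · rcases lt_or_gt_of_ne a4 with h' | h'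
      · rcases lt_or_gt_of_ne a2 with h'' | h''
        · exact Or.inr (Or.inr (Or.inl ⟨h, h', h''⟩))
        · exact Or.inr (Or.inl (Or.inl ⟨h, h''⟩))
      · exact Or.inl (Or.inl h')
    · rcases lt_or_gt_of_ne a3 with h' | h'
      · rcases lt_or_gt_of_ne a2 with h'' | h''
        · exact Or.inr (Or.inl (Or.inr ⟨h, h''⟩))
        · exact Or.inr (Or.inr (Or.inr ⟨h, h', h''⟩))
      · exact Or.inl (Or.inr h')
  -- nested relation
  have hcard1 : (t - 1) * t ^ 2 < (Finset.univ : Finset (Fin (t ^ 3))).card := by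
    rw [Finset.card_univ, Fintype.card_fin]
    obtain ⟨u, rfl⟩ : ∃ u, t = u + 1 := ⟨t - 1, by omega⟩
    simp only [Nat.add_sub_cancel]
    ring_nf
    nlinarith
  rcases mirsky (fun i j : Fin (t ^ 3) => (F i).1 < (F j).1 ∧ (F j).2 < (F i).2)
      (fun i h => lt_irrefl _ h.1)
      (fun h1 h2 => ⟨h1.1.trans h2.1, h2.2.trans h1.2⟩)
      Finset.univ (t ^ 2) t ht hcard1 with ⟨c, _, hcc, hchain⟩ | ⟨A, _, hAc, hAanti⟩
  · obtain ⟨c', hc's, hc'card⟩ := Finset.exists_subset_card_eq hcc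
    refine ⟨c', hc'card, Or.inr (Or.inl ?_)⟩
    intro i hi j hj hij
    rcases hchain i (hc's hi) j (hc's hj) hij with h | h
    · exact Or.inl h
    · exact Or.inr h
  · -- antichain: pairwise series or crossing
    have hA2 : ∀ i ∈ A, ∀ j ∈ A, i ≠ j → InSeriesP (F i) (F j) ∨ CrossingP (F i) (F j) := by
      intro i hi j hj hij
      rcases htri i j hij with h | h | h
      · exact Or.inl h
      · rcases h with h | h
        · exact absurd h (hAanti i hi j hj)
        · exact absurd h (hAanti j hj i hi)
      · exact Or.inr h
    have hcard2 : (t - 1) * t < A.card := by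
      have : (t - 1) * t < t ^ 2 := by
        obtain ⟨u, rfl⟩ : ∃ u, t = u + 1 := ⟨t - 1, by omega⟩
        simp only [Nat.add_sub_cancel]
        nlinarith
      omega
    rcases mirsky (fun i j : Fin (t ^ 3) => (F i).2 < (F j).1)
        (fun i h => lt_asymm (hlt i) h)
        (fun h1 h2 => h1.trans ((hlt _).trans h2))
        A t t ht hcard2 with ⟨c, hcA, hcc, hchain⟩ | ⟨c, hcA, hcc, hanti⟩
    · obtain ⟨c', hc's, hc'card⟩ := Finset.exists_subset_card_eq hcc
      refine ⟨c', hc'card, Or.inl ?_⟩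
      intro i hi j hj hij
      exact hchain i (hc's hi) j (hc's hj) hij
    · obtain ⟨c', hc's, hc'card⟩ := Finset.exists_subset_card_eq hcc
      refine ⟨c', hc'card, Or.inr (Or.inr ?_)⟩
      intro i hi j hj hij
      rcases hA2 i (hcA (hc's hi)) j (hcA (hc's hj)) hij with h | h
      · rcases h with h | h
        · exact absurd h (hanti i (hc's hi) j (hc's hj))
        · exact absurd h (hanti j (hc's hj) i (hc's hi))
      · exact h
end

section
/- Let t be a positive integer, Γ₁ and Γ₂ groups, (G,γ) a (Γ₁⊕Γ₂)-labeled simple graph, and S ⊆ V(G). If G contains 3t pairwise vertex-disjoint Γ₁-non-zero S-paths and t pairwise vertex-disjoint Γ₂-non-zero S-paths, then G contains 2t pairwise vertex-disjoint S-paths P₁, …, P_{2t} such that Pᵢ is Γ₁-non-zero for all i ≤ t and Pᵢ is Γ₂-non-zero for all t < i ≤ 2t. -/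
open SimpleGraph

/-- An `S`-path: a path with at least one edge, both endpoints in `S`, and no internal
vertex in `S`. -/
def IsAPath {V : Type} {G : SimpleGraph V} (S : Set V) {u v : V} (p : G.Walk u v) : Prop :=
  p.IsPath ∧ 1 ≤ p.length ∧ u ∈ S ∧ v ∈ S ∧ ∀ x ∈ p.support, x ∈ S → x = u ∨ x = v

section helpers

variable {V Γ : Type} [Group Γ] {G : SimpleGraph V}

/-- First vertex on a path satisfying `P`, together with the clean prefix and the rest. -/
lemma exists_first_hit (P : V → Prop) :
    ∀ {x y : V} (w : G.Walk x y), w.IsPath → (∃ v ∈ w.support, P v) →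
    ∃ (u : V) (pi : G.Walk x u) (rest : G.Walk u y), pi.IsPath ∧ pi.append rest = w ∧
      (∀ v ∈ pi.support, v ∈ w.support) ∧ P u ∧ (∀ v ∈ pi.support, P v → v = u) := by
  intro x y w
  induction w with
  | nil =>
    intro _ hv
    obtain ⟨v, hv1, hv2⟩ := hv
    simp only [Walk.support_nil, List.mem_singleton] at hv1
    subst hv1
    exact ⟨v, Walk.nil, Walk.nil, by simp, rfl, by simp, hv2, by simp⟩
  | @cons a b c hadj p ih =>
    intro hpath hv
    by_cases hPa : P a
    · exact ⟨a, Walk.nil, Walk.cons hadj p, by simp, rfl, by simp, hPa, by simp⟩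
    · obtain ⟨v, hv1, hv2⟩ := hv
      rw [Walk.support_cons, List.mem_cons] at hv1
      rcases hv1 with rfl | hv1
      · exact absurd hv2 hPa
      · obtain ⟨u, pi, rest, h1, happ, h2, h3, h4⟩ :=
          ih ((Walk.cons_isPath_iff hadj p).mp hpath).1 ⟨v, hv1, hv2⟩
        refine ⟨u, Walk.cons hadj pi, rest, ?_, ?_, ?_, h3, ?_⟩
        · rw [Walk.cons_isPath_iff]
          refine ⟨h1, fun hmem => ?_⟩
          exact ((Walk.cons_isPath_iff hadj p).mp hpath).2 (h2 _ hmem)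
        · rw [Walk.cons_append, happ]
        · intro z hz
          rw [Walk.support_cons, List.mem_cons] at hz ⊢
          rcases hz with rfl | hz
          · exact Or.inl rfl
          · exact Or.inr (h2 _ hz)
        · intro z hz hPz
          rw [Walk.support_cons, List.mem_cons] at hz
          rcases hz with rfl | hz
          · exact absurd hPz hPa
          · exact h4 _ hz hPz

/-- If `z` lies on both halves of an appended path, it is the junction vertex. -/
lemma junction_eq {x u y : V} (p1 : G.Walk x u) (p2 : G.Walk u y)
    (hn : (p1.append p2).support.Nodup) :
    ∀ z, z ∈ p1.support → z ∈ p2.support → z = u := by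
  intro z h1 h2
  by_contra hz
  rw [Walk.support_append] at hn
  obtain ⟨-, -, hdisj⟩ := List.nodup_append'.mp hn
  have h2' : z ∈ p2.support.tail := by
    have hc := Walk.support_eq_cons p2
    rw [hc, List.mem_cons] at h2
    tauto
  exact hdisj h1 h2'

/-- A walk all of whose darts stay inside the (pairwise disjoint) family `Q` stays in the
member of `Q` containing its start. -/
lemma walk_stay {m : ℕ} {A B : Fin m → V} (Q : ∀ i, G.Walk (A i) (B i))
    (hQd : ∀ i j, i ≠ j → ∀ v, v ∈ (Q i).support → v ∉ (Q j).support) :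
    ∀ {x y : V} (w : G.Walk x y),
      (∀ d ∈ w.darts, ∃ i, d.toProd.1 ∈ (Q i).support ∧ d.toProd.2 ∈ (Q i).support) →
      ∀ i₀, x ∈ (Q i₀).support → y ∈ (Q i₀).support := by
  intro x y w
  induction w with
  | nil => exact fun _ _ h => h
  | @cons a b c hadj p ih =>
    intro hd i₀ hx
    obtain ⟨i, h1, h2⟩ := hd ⟨(a, b), hadj⟩ (by rw [Walk.darts_cons]; exact List.mem_cons_self)
    have hii : i = i₀ := by
      by_contra hne
      exact hQd i i₀ hne _ h1 hx
    subst hii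
    exact ih (fun dd hdx => hd dd (by rw [Walk.darts_cons]; exact List.mem_cons_of_mem _ hdx)) i h2

end helpers

section nonQ

open scoped Classical in
/-- Number of darts of `w` which do not lie inside a member of the family `Q`. -/
noncomputable def nonQ {V : Type} {G : SimpleGraph V} {m : ℕ} {A B : Fin m → V}
    (Q : ∀ i, G.Walk (A i) (B i)) {x y : V} (w : G.Walk x y) : ℕ :=
  w.darts.countP
    (fun dd => !(decide (∃ i, dd.toProd.1 ∈ (Q i).support ∧ dd.toProd.2 ∈ (Q i).support)))

variable {V : Type} {G : SimpleGraph V} {m : ℕ} {A B : Fin m → V} (Q : ∀ i, G.Walk (A i) (B i))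

lemma nonQ_append {x y z : V} (p : G.Walk x y) (q : G.Walk y z) :
    nonQ Q (p.append q) = nonQ Q p + nonQ Q q := by
  simp [nonQ, Walk.darts_append, List.countP_append]

lemma nonQ_reverse {x y : V} (p : G.Walk x y) : nonQ Q p.reverse = nonQ Q p := by
  classical
  rw [nonQ, nonQ, Walk.darts_reverse, List.countP_reverse, List.countP_map]
  congr 1
  funext dd
  simp only [Function.comp_apply, Dart.symm_toProd, Prod.fst_swap, Prod.snd_swap]
  congr 1
  rw [decide_eq_decide]
  constructor
  · rintro ⟨i, h1, h2⟩; exact ⟨i, h2, h1⟩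
  · rintro ⟨i, h1, h2⟩; exact ⟨i, h2, h1⟩

lemma nonQ_zero {x y : V} (w : G.Walk x y) (h : nonQ Q w = 0) :
    ∀ d ∈ w.darts, ∃ i, d.toProd.1 ∈ (Q i).support ∧ d.toProd.2 ∈ (Q i).support := by
  intro d hd
  have := List.countP_eq_zero.mp h d hd
  simpa using this

lemma nonQ_eq_zero_of_all {x y : V} (w : G.Walk x y)
    (h : ∀ d ∈ w.darts, ∃ i, d.toProd.1 ∈ (Q i).support ∧ d.toProd.2 ∈ (Q i).support) :
    nonQ Q w = 0 := by
  rw [nonQ, List.countP_eq_zero]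
  intro d hd
  simpa using h d hd

end nonQ

section glue

variable {V Γ₁ Γ₂ : Type} [Group Γ₁] [Group Γ₂] {G : SimpleGraph V}

/-- Glue two disjoint families of `t` paths into one family of `2t` paths. -/
lemma glue_families (S : Set V) (γ1 : V → V → Γ₁) (γ2 : V → V → Γ₂) (t : ℕ)
    (a1 b1 : Fin t → V) (p1 : ∀ i, G.Walk (a1 i) (b1 i))
    (a2 b2 : Fin t → V) (p2 : ∀ i, G.Walk (a2 i) (b2 i))
    (h1 : ∀ i, IsAPath S (p1 i)) (h2 : ∀ i, IsAPath S (p2 i))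
    (hv1 : ∀ i, walkVal γ1 (p1 i) ≠ 1) (hv2 : ∀ i, walkVal γ2 (p2 i) ≠ 1)
    (hd1 : ∀ i j, i ≠ j → ∀ v, v ∈ (p1 i).support → v ∉ (p1 j).support)
    (hd2 : ∀ i j, i ≠ j → ∀ v, v ∈ (p2 i).support → v ∉ (p2 j).support)
    (hd12 : ∀ i j, ∀ v, v ∈ (p1 i).support → v ∉ (p2 j).support) :
    ∃ (a b : Fin (2 * t) → V) (p : ∀ i, G.Walk (a i) (b i)),
      (∀ i, IsAPath S (p i)) ∧
      (∀ i j, i ≠ j → ∀ v : V, v ∈ (p i).support → v ∉ (p j).support) ∧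
      (∀ i : Fin (2 * t), (i : ℕ) < t → walkVal γ1 (p i) ≠ 1) ∧
      (∀ i : Fin (2 * t), t ≤ (i : ℕ) → walkVal γ2 (p i) ≠ 1) := by
  have hidx : ∀ i : Fin (2 * t), ¬ (i : ℕ) < t → (i : ℕ) - t < t := by
    intro i h
    have := i.isLt
    omega
  set F : Fin (2 * t) → Σ x : V, Σ y : V, G.Walk x y := fun i =>
    if h : (i : ℕ) < t then ⟨a1 ⟨(i : ℕ), h⟩, b1 ⟨(i : ℕ), h⟩, p1 ⟨(i : ℕ), h⟩⟩
    else ⟨a2 ⟨(i : ℕ) - t, hidx i h⟩, b2 ⟨(i : ℕ) - t, hidx i h⟩, p2 ⟨(i : ℕ) - t, hidx i h⟩⟩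
    with hF
  have hFlt : ∀ (i : Fin (2 * t)) (h : (i : ℕ) < t),
      F i = ⟨a1 ⟨(i : ℕ), h⟩, b1 ⟨(i : ℕ), h⟩, p1 ⟨(i : ℕ), h⟩⟩ := by
    intro i h
    simp only [hF]
    exact dif_pos h
  have hFge : ∀ (i : Fin (2 * t)) (h : ¬ (i : ℕ) < t),
      F i = ⟨a2 ⟨(i : ℕ) - t, hidx i h⟩, b2 ⟨(i : ℕ) - t, hidx i h⟩, p2 ⟨(i : ℕ) - t, hidx i h⟩⟩ := by
    intro i h
    simp only [hF]
    exact dif_neg h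
  refine ⟨fun i => (F i).1, fun i => (F i).2.1, fun i => (F i).2.2, ?_, ?_, ?_, ?_⟩
  · intro i
    show IsAPath S (F i).2.2
    by_cases h : (i : ℕ) < t
    · rw [hFlt i h]; exact h1 _
    · rw [hFge i h]; exact h2 _
  · intro i j hij v hvi hvj
    change v ∈ (F i).2.2.support at hvi
    change v ∈ (F j).2.2.support at hvj
    have hij' : (i : ℕ) ≠ (j : ℕ) := fun hh => hij (Fin.ext hh)
    by_cases hi : (i : ℕ) < t <;> by_cases hj : (j : ℕ) < t
    · rw [hFlt i hi] at hvi
      rw [hFlt j hj] at hvj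
      exact hd1 ⟨(i : ℕ), hi⟩ ⟨(j : ℕ), hj⟩ (fun hh => hij' (congrArg (Fin.val : Fin t → ℕ) hh)) v hvi hvj
    · rw [hFlt i hi] at hvi
      rw [hFge j hj] at hvj
      exact hd12 ⟨(i : ℕ), hi⟩ ⟨(j : ℕ) - t, hidx j hj⟩ v hvi hvj
    · rw [hFge i hi] at hvi
      rw [hFlt j hj] at hvj
      exact hd12 ⟨(j : ℕ), hj⟩ ⟨(i : ℕ) - t, hidx i hi⟩ v hvj hvi
    · rw [hFge i hi] at hvi
      rw [hFge j hj] at hvj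
      refine hd2 ⟨(i : ℕ) - t, hidx i hi⟩ ⟨(j : ℕ) - t, hidx j hj⟩ ?_ v hvi hvj
      intro hh
      have := congrArg Fin.val hh
      simp only at this
      omega
  · intro i hi
    show walkVal γ1 (F i).2.2 ≠ 1
    rw [hFlt i hi]
    exact hv1 _
  · intro i hi
    show walkVal γ2 (F i).2.2 ≠ 1
    have h' : ¬ (i : ℕ) < t := by omega
    rw [hFge i h']
    exact hv2 _

end glue

section mainproof

def GoalProp {V Γ₁ Γ₂ : Type} [Group Γ₁] [Group Γ₂] (G : SimpleGraph V)
    (γ1 : V → V → Γ₁) (γ2 : V → V → Γ₂) (S : Set V) (t : ℕ) : Prop :=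
  ∃ (a b : Fin (2 * t) → V) (p : ∀ i, G.Walk (a i) (b i)),
    (∀ i, IsAPath S (p i)) ∧
    (∀ i j, i ≠ j → ∀ v : V, v ∈ (p i).support → v ∉ (p j).support) ∧
    (∀ i : Fin (2 * t), (i : ℕ) < t → walkVal γ1 (p i) ≠ 1) ∧
    (∀ i : Fin (2 * t), t ≤ (i : ℕ) → walkVal γ2 (p i) ≠ 1)

variable {V Γ₁ Γ₂ : Type} [Group Γ₁] [Group Γ₂] {G : SimpleGraph V}

theorem aux_induction (γ1 : V → V → Γ₁) (γ2 : V → V → Γ₂) (hγ2 : IsLab G γ2) (S : Set V) (t : ℕ)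
    (A B : Fin (3 * t) → V) (Q : ∀ i, G.Walk (A i) (B i))
    (hQ : ∀ i, IsAPath S (Q i))
    (hQ1 : ∀ i, walkVal γ1 (Q i) ≠ 1)
    (hQd : ∀ i j, i ≠ j → ∀ v, v ∈ (Q i).support → v ∉ (Q j).support) :
    ∀ (N : ℕ) (c d : Fin t → V) (r : ∀ j, G.Walk (c j) (d j)),
      (∀ j, IsAPath S (r j)) →
      (∀ j, walkVal γ2 (r j) ≠ 1) →
      (∀ i j, i ≠ j → ∀ v, v ∈ (r i).support → v ∉ (r j).support) →
      (∑ j, nonQ Q (r j) ≤ N) →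
      GoalProp G γ1 γ2 S t := by
  intro N
  induction N using Nat.strong_induction_on with
  | _ N IH =>
  intro c d r hr hrv hrd hmeas
  classical
  by_cases hcase : ∀ i : Fin (3 * t), (∃ v ∈ (Q i).support, ∃ j, v ∈ (r j).support) →
      ((∃ j, A i ∈ (r j).support) ∨ (∃ j, B i ∈ (r j).support))
  · -- extraction case: every crossed Q has an endpoint on the r-family
    set E : Finset V := (Finset.univ.image c) ∪ (Finset.univ.image d) with hE
    have hEcard : E.card ≤ 2 * t := by
      have h1 : (Finset.univ.image c).card ≤ t := by
        refine le_trans (Finset.card_image_le) ?_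
        simp
      have h2 : (Finset.univ.image d).card ≤ t := by
        refine le_trans (Finset.card_image_le) ?_
        simp
      have h3 := Finset.card_union_le (Finset.univ.image c) (Finset.univ.image d)
      rw [hE]
      omega
    set crossed : Finset (Fin (3 * t)) :=
      Finset.univ.filter (fun i => ∃ v ∈ (Q i).support, ∃ j, v ∈ (r j).support) with hcr
    set φ : Fin (3 * t) → V := fun i => if (∃ j, A i ∈ (r j).support) then A i else B i with hφ
    have hφQ : ∀ i, φ i ∈ (Q i).support := by
      intro i
      simp only [hφ]
      by_cases h : (∃ j, A i ∈ (r j).support)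
      · rw [if_pos h]; exact Walk.start_mem_support _
      · rw [if_neg h]; exact Walk.end_mem_support _
    have hφE : ∀ i ∈ crossed, φ i ∈ E := by
      intro i hi
      rw [hcr, Finset.mem_filter] at hi
      have hAB := hcase i hi.2
      have hU : ∃ j, φ i ∈ (r j).support := by
        simp only [hφ]
        by_cases h : (∃ j, A i ∈ (r j).support)
        · rw [if_pos h]; exact h
        · rw [if_neg h]; exact hAB.resolve_left h
      obtain ⟨j, hj⟩ := hU
      have hφS : φ i ∈ S := by
        simp only [hφ]
        by_cases h : (∃ j, A i ∈ (r j).support)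
        · rw [if_pos h]; exact (hQ i).2.2.1
        · rw [if_neg h]; exact (hQ i).2.2.2.1
      rcases (hr j).2.2.2.2 _ hj hφS with h | h
      · rw [hE]
        apply Finset.mem_union_left
        rw [h]
        exact Finset.mem_image_of_mem _ (Finset.mem_univ j)
      · rw [hE]
        apply Finset.mem_union_right
        rw [h]
        exact Finset.mem_image_of_mem _ (Finset.mem_univ j)
    have hφinj : Set.InjOn φ ↑crossed := by
      intro i1 _ i2 _ heq
      by_contra hne
      exact hQd i1 i2 hne _ (hφQ i1) (heq ▸ hφQ i2)
    have hccard : crossed.card ≤ 2 * t :=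
      le_trans (Finset.card_le_card_of_injOn φ hφE hφinj) hEcard
    have huncard : t ≤ (Finset.univ \ crossed).card := by
      have h1 : (Finset.univ \ crossed).card = Finset.univ.card - crossed.card :=
        Finset.card_sdiff_of_subset (Finset.subset_univ _)
      have h2 : (Finset.univ : Finset (Fin (3 * t))).card = 3 * t := by simp
      omega
    obtain ⟨s, hssub, hscard⟩ := Finset.exists_subset_card_eq huncard
    set eF : Fin t → Fin (3 * t) := fun k => ((s.orderIsoOfFin hscard) k : Fin (3 * t)) with heF
    have heinj : Function.Injective eF := by
      intro k l hkl
      exact (s.orderIsoOfFin hscard).injective (Subtype.ext hkl)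
    have hclean : ∀ k, ∀ v ∈ (Q (eF k)).support, ∀ j, v ∉ (r j).support := by
      intro k
      have hmem : eF k ∈ Finset.univ \ crossed := hssub (by
        rw [heF]
        exact ((s.orderIsoOfFin hscard) k).2)
      have hnc : eF k ∉ crossed := (Finset.mem_sdiff.mp hmem).2
      intro v hv j hvj
      apply hnc
      rw [hcr, Finset.mem_filter]
      exact ⟨Finset.mem_univ _, ⟨v, hv, j, hvj⟩⟩
    exact glue_families S γ1 γ2 t
      (fun k => A (eF k)) (fun k => B (eF k)) (fun k => Q (eF k)) c d r
      (fun k => hQ _) hr (fun k => hQ1 _) hrv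
      (fun k l hkl v hv => fun hv' => hQd (eF k) (eF l) (fun hh => hkl (heinj hh)) v hv hv')
      hrd
      (fun k j v hv hvj => hclean k v hv j hvj)
  · -- surgery case
    push_neg at hcase
    obtain ⟨i0, hcross, hAni, hBni⟩ := hcase
    obtain ⟨u, pi', rest, hpi'path, hpi'app, hpi'sub, hUu, hmin⟩ :=
      exists_first_hit (fun v => ∃ j, v ∈ (r j).support) (Q i0) (hQ i0).1 hcross
    obtain ⟨j₀, hj₀⟩ := hUu
    have huQ : u ∈ (Q i0).support := hpi'sub _ (Walk.end_mem_support _)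
    have hQapnodup : (pi'.append rest).support.Nodup := by
      rw [hpi'app]
      exact (Walk.isPath_def _).mp (hQ i0).1
    have huS : u ∉ S := by
      intro huS
      rcases (hQ i0).2.2.2.2 u huQ huS with h | h
      · exact hAni j₀ (by rw [← h]; exact hj₀)
      · exact hBni j₀ (by rw [← h]; exact hj₀)
    have hBpi : B i0 ∉ pi'.support := by
      intro hB
      have hBu : B i0 = u := junction_eq pi' rest hQapnodup _ hB (Walk.end_mem_support rest)
      apply huS
      rw [← hBu]
      exact (hQ i0).2.2.2.1
    -- the reversed prefix π : from u to A i0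
    have hπpath : pi'.reverse.IsPath := hpi'path.reverse
    have hπsupp : ∀ v, v ∈ pi'.reverse.support ↔ v ∈ pi'.support := by
      intro v
      rw [Walk.support_reverse, List.mem_reverse]
    have hπlen : 1 ≤ pi'.reverse.length := by
      rw [Walk.length_reverse]
      rcases Nat.eq_zero_or_pos pi'.length with h0 | h
      · exfalso
        have hAu : A i0 = u := Walk.eq_of_length_eq_zero h0
        exact hAni j₀ (by rw [hAu]; exact hj₀)
      · exact h
    have hπQ : ∀ v ∈ pi'.reverse.support, v ∈ (Q i0).support := fun v hv =>
      hpi'sub _ ((hπsupp v).mp hv)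
    have hπzero : nonQ Q pi'.reverse = 0 := by
      apply nonQ_eq_zero_of_all
      intro dd hdd
      exact ⟨i0, hπQ _ (Walk.dart_fst_mem_support_of_mem_darts _ hdd),
        hπQ _ (Walk.dart_snd_mem_support_of_mem_darts _ hdd)⟩
    -- split r j₀ at u
    set T := (r j₀).takeUntil u hj₀ with hT
    set R' := (r j₀).dropUntil u hj₀ with hR'
    have hspec : T.append R' = r j₀ := Walk.take_spec _ hj₀
    have hDnodup : (r j₀).support.Nodup := (Walk.isPath_def _).mp (hr j₀).1
    have happnodup : (T.append R').support.Nodup := by rw [hspec]; exact hDnodup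
    have hjunc := junction_eq T R' happnodup
    have hnodup3 : T.support.Nodup ∧ R'.support.tail.Nodup ∧ T.support.Disjoint R'.support.tail := by
      have h := happnodup
      rw [Walk.support_append] at h
      exact List.nodup_append'.mp h
    have hTpath : T.IsPath := (Walk.isPath_def _).mpr hnodup3.1
    have hR'path : R'.IsPath := by
      rw [Walk.isPath_def, Walk.support_eq_cons R']
      refine List.nodup_cons.mpr ⟨?_, hnodup3.2.1⟩
      intro hu
      exact hnodup3.2.2 (Walk.end_mem_support T) hu
    have hsubT : ∀ v ∈ T.support, v ∈ (r j₀).support := by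
      intro v hv
      rw [← hspec, Walk.mem_support_append_iff]
      exact Or.inl hv
    have hsubR' : ∀ v ∈ R'.support, v ∈ (r j₀).support := by
      intro v hv
      rw [← hspec, Walk.mem_support_append_iff]
      exact Or.inr hv
    have hbT : d j₀ ∉ T.support := by
      intro hb
      have hbu : d j₀ = u := hjunc _ hb (Walk.end_mem_support R')
      apply huS
      rw [← hbu]
      exact (hr j₀).2.2.2.1
    have haR' : c j₀ ∉ R'.support := by
      intro ha
      have hau : c j₀ = u := hjunc _ (Walk.start_mem_support T) ha
      apply huS
      rw [← hau]
      exact (hr j₀).2.2.1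
    have hnqD : nonQ Q (r j₀) = nonQ Q T + nonQ Q R' := by
      rw [← hspec, nonQ_append]
    have hTpos : 1 ≤ nonQ Q T := by
      by_contra h0
      push_neg at h0
      have h0' : nonQ Q T.reverse = 0 := by
        rw [nonQ_reverse]
        omega
      have hstay := walk_stay Q hQd T.reverse (nonQ_zero Q _ h0') i0 huQ
      rcases (hQ i0).2.2.2.2 _ hstay (hr j₀).2.2.1 with h | h
      · exact hAni j₀ (by rw [← h]; exact Walk.start_mem_support (r j₀))
      · exact hBni j₀ (by rw [← h]; exact Walk.start_mem_support (r j₀))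
    have hR'pos : 1 ≤ nonQ Q R' := by
      by_contra h0
      push_neg at h0
      have h0' : nonQ Q R' = 0 := by omega
      have hstay := walk_stay Q hQd R' (nonQ_zero Q _ h0') i0 huQ
      rcases (hQ i0).2.2.2.2 _ hstay (hr j₀).2.2.2.1 with h | h
      · exact hAni j₀ (by rw [← h]; exact Walk.end_mem_support (r j₀))
      · exact hBni j₀ (by rw [← h]; exact Walk.end_mem_support (r j₀))
    have hvsplit : walkVal γ2 (r j₀) = walkVal γ2 T * walkVal γ2 R' := by
      rw [← hspec, walkVal_append]
    have main : ∀ (x : V) (stub : G.Walk x u), stub.IsPath →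
        (∀ v ∈ stub.support, v ∈ (r j₀).support) → x ∈ S →
        (∀ v ∈ stub.support, v ∈ S → v = x) →
        walkVal γ2 (stub.append pi'.reverse) ≠ 1 →
        nonQ Q stub + 1 ≤ nonQ Q (r j₀) →
        GoalProp G γ1 γ2 S t := by
      intro x stub hstubpath hstubsub hxS hstubS hval hcount
      have hπnodup : pi'.reverse.support.Nodup := (Walk.isPath_def _).mp hπpath
      have h1 : (u :: pi'.reverse.support.tail).Nodup := by
        rw [← Walk.support_eq_cons]
        exact hπnodup
      have hunotail : u ∉ pi'.reverse.support.tail := (List.nodup_cons.mp h1).1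
      have htailnodup : pi'.reverse.support.tail.Nodup := (List.nodup_cons.mp h1).2
      have hCpath : (stub.append pi'.reverse).IsPath := by
        rw [Walk.isPath_def, Walk.support_append, List.nodup_append']
        refine ⟨(Walk.isPath_def _).mp hstubpath, htailnodup, ?_⟩
        intro z hz1 hz2
        have hzpi : z ∈ pi'.support :=
          (hπsupp z).mp (List.mem_of_mem_tail hz2)
        have hzu : z = u := hmin z hzpi ⟨j₀, hstubsub z hz1⟩
        rw [hzu] at hz2
        exact hunotail hz2
      have hClen : 1 ≤ (stub.append pi'.reverse).length := by
        rw [Walk.length_append]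
        omega
      have hCS : ∀ z ∈ (stub.append pi'.reverse).support, z ∈ S → z = x ∨ z = A i0 := by
        intro z hz hzS
        rw [Walk.support_append, List.mem_append] at hz
        rcases hz with hz | hz
        · exact Or.inl (hstubS z hz hzS)
        · have hzpi : z ∈ pi'.support := (hπsupp z).mp (List.mem_of_mem_tail hz)
          rcases (hQ i0).2.2.2.2 z (hpi'sub z hzpi) hzS with h | h
          · exact Or.inr h
          · exfalso
            rw [h] at hzpi
            exact hBpi hzpi
      have hCA : IsAPath S (stub.append pi'.reverse) :=
        ⟨hCpath, hClen, hxS, (hQ i0).2.2.1, hCS⟩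
      have hCdisj : ∀ j, j ≠ j₀ → ∀ v, v ∈ (stub.append pi'.reverse).support →
          v ∉ (r j).support := by
        intro j hj v hv hvj
        rw [Walk.support_append, List.mem_append] at hv
        rcases hv with hv | hv
        · exact hrd j j₀ hj v hvj (hstubsub v hv)
        · have hvpi : v ∈ pi'.support := (hπsupp v).mp (List.mem_of_mem_tail hv)
          have hvu : v = u := hmin v hvpi ⟨j, hvj⟩
          rw [hvu] at hvj
          exact hrd j j₀ hj u hvj hj₀
      have hCnq : nonQ Q (stub.append pi'.reverse) = nonQ Q stub := by
        rw [nonQ_append, hπzero]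
        omega
      set F : Fin t → Σ x' : V, Σ y' : V, G.Walk x' y' := fun j =>
        if _h : j = j₀ then ⟨x, A i0, stub.append pi'.reverse⟩ else ⟨c j, d j, r j⟩ with hF
      have hFj₀ : F j₀ = ⟨x, A i0, stub.append pi'.reverse⟩ := by
        simp [hF]
      have hFne : ∀ j, j ≠ j₀ → F j = ⟨c j, d j, r j⟩ := by
        intro j hj
        simp only [hF]
        exact dif_neg hj
      have hFval : nonQ Q ((F j₀).2.2) = nonQ Q stub := by
        rw [hFj₀]
        exact hCnq
      have hsum : (∑ j, nonQ Q ((F j).2.2)) + 1 ≤ ∑ j, nonQ Q (r j) := by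
        rw [← Finset.sum_erase_add _ _ (Finset.mem_univ j₀),
            ← Finset.sum_erase_add _ (fun j => nonQ Q (r j)) (Finset.mem_univ j₀)]
        have hterm : ∑ j ∈ Finset.univ.erase j₀, nonQ Q ((F j).2.2)
            = ∑ j ∈ Finset.univ.erase j₀, nonQ Q (r j) := by
          apply Finset.sum_congr rfl
          intro j hj
          rw [hFne j (Finset.mem_erase.mp hj).1]
        rw [hterm, hFval]
        omega
      refine IH (∑ j, nonQ Q ((F j).2.2)) (by omega) (fun j => (F j).1) (fun j => (F j).2.1)
        (fun j => (F j).2.2) ?_ ?_ ?_ (le_refl _)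
      · intro j
        show IsAPath S (F j).2.2
        by_cases hj : j = j₀
        · rw [hj, hFj₀]
          exact hCA
        · rw [hFne j hj]
          exact hr j
      · intro j
        show walkVal γ2 (F j).2.2 ≠ 1
        by_cases hj : j = j₀
        · rw [hj, hFj₀]
          exact hval
        · rw [hFne j hj]
          exact hrv j
      · intro j k hjk v hvj hvk
        change v ∈ (F j).2.2.support at hvj
        change v ∈ (F k).2.2.support at hvk
        by_cases hj : j = j₀
        · have hk : k ≠ j₀ := fun hh => hjk (by rw [hj, hh])
          rw [hj, hFj₀] at hvj
          rw [hFne k hk] at hvk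
          exact hCdisj k hk v hvj hvk
        · rw [hFne j hj] at hvj
          by_cases hk : k = j₀
          · rw [hk, hFj₀] at hvk
            exact hCdisj j hj v hvk hvj
          · rw [hFne k hk] at hvk
            exact hrd j k hjk v hvj hvk
    by_cases hvT : walkVal γ2 (T.append pi'.reverse) = 1
    · refine main (d j₀) R'.reverse hR'path.reverse ?_ (hr j₀).2.2.2.1 ?_ ?_ ?_
      · intro v hv
        rw [Walk.support_reverse, List.mem_reverse] at hv
        exact hsubR' v hv
      · intro v hv hvS
        rw [Walk.support_reverse, List.mem_reverse] at hv
        rcases (hr j₀).2.2.2.2 v (hsubR' v hv) hvS with h | h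
        · exfalso
          rw [h] at hv
          exact haR' hv
        · exact h
      · rw [walkVal_append, walkVal_reverse γ2 hγ2]
        intro h1
        apply hrv j₀
        rw [hvsplit]
        have h2 : walkVal γ2 T * walkVal γ2 pi'.reverse = 1 := by
          rw [← walkVal_append]
          exact hvT
        have e1 : walkVal γ2 T = (walkVal γ2 pi'.reverse)⁻¹ :=
          eq_inv_of_mul_eq_one_left h2
        have e2 : walkVal γ2 R' = walkVal γ2 pi'.reverse := inv_mul_eq_one.mp h1
        rw [e1, e2]
        simp
      · rw [nonQ_reverse, hnqD]
        omega
    · refine main (c j₀) T hTpath hsubT (hr j₀).2.2.1 ?_ hvT ?_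
      · intro v hv hvS
        rcases (hr j₀).2.2.2.2 v (hsubT v hv) hvS with h | h
        · exact h
        · exfalso
          rw [h] at hv
          exact hbT hv
      · rw [hnqD]
        omega
end mainproof

/-- Lemma 17: given `3t` disjoint `Γ₁`-non-zero `S`-paths and `t` disjoint `Γ₂`-non-zero
`S`-paths, there are `2t` disjoint `S`-paths, the first `t` being `Γ₁`-non-zero and the
remaining `t` being `Γ₂`-non-zero. -/
theorem mixed_nonzero_S_paths
    {V Γ₁ Γ₂ : Type} [Group Γ₁] [Group Γ₂] (G : SimpleGraph V)
    (γ : V → V → Γ₁ × Γ₂) (hγ : IsLab G γ) (S : Set V) (t : ℕ) (ht : 0 < t)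
    (h₁ : ∃ (a b : Fin (3 * t) → V) (p : ∀ i, G.Walk (a i) (b i)),
        (∀ i, IsAPath S (p i)) ∧
        (∀ i, walkVal (fun x y => (γ x y).1) (p i) ≠ 1) ∧
        (∀ i j, i ≠ j → ∀ v : V, v ∈ (p i).support → v ∉ (p j).support))
    (h₂ : ∃ (a b : Fin t → V) (p : ∀ i, G.Walk (a i) (b i)),
        (∀ i, IsAPath S (p i)) ∧
        (∀ i, walkVal (fun x y => (γ x y).2) (p i) ≠ 1) ∧
        (∀ i j, i ≠ j → ∀ v : V, v ∈ (p i).support → v ∉ (p j).support)) :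
    ∃ (a b : Fin (2 * t) → V) (p : ∀ i, G.Walk (a i) (b i)),
      (∀ i, IsAPath S (p i)) ∧
      (∀ i j, i ≠ j → ∀ v : V, v ∈ (p i).support → v ∉ (p j).support) ∧
      (∀ i : Fin (2 * t), (i : ℕ) < t → walkVal (fun x y => (γ x y).1) (p i) ≠ 1) ∧
      (∀ i : Fin (2 * t), t ≤ (i : ℕ) → walkVal (fun x y => (γ x y).2) (p i) ≠ 1) := by
  obtain ⟨A, B, Q, hQ, hQ1, hQd⟩ := h₁
  obtain ⟨c, d, r, hr, hrv, hrd⟩ := h₂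
  have hγ2 : IsLab G (fun x y => (γ x y).2) := by
    intro u v h
    have hh := hγ u v h
    show (γ v u).2 = ((γ u v).2)⁻¹
    rw [hh]
    rfl
  exact aux_induction (fun x y => (γ x y).1) (fun x y => (γ x y).2) hγ2 S t A B Q hQ hQ1 hQd
    (∑ j, nonQ Q (r j)) c d r hr hrv hrd (le_refl _)
end

section
/- For all positive integers r and s, every family of r·s intervals [a,b] (with a ≤ b) in a linearly ordered set contains r pairwise disjoint intervals or s pairwise intersecting intervals. -/
/-- Dilworth-type statement for intervals: every family of `r * s` intervals in a linear
order contains `r` pairwise disjoint intervals or `s` pairwise intersecting intervals. -/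
theorem intervals_disjoint_or_intersecting
    {L : Type} [LinearOrder L] (r s : ℕ) (hr : 0 < r) (hs : 0 < s)
    (F : Fin (r * s) → L × L) (hF : ∀ i, (F i).1 ≤ (F i).2) :
    (∃ I : Finset (Fin (r * s)), I.card = r ∧ ∀ i ∈ I, ∀ j ∈ I, i ≠ j →
        Set.Icc (F i).1 (F i).2 ∩ Set.Icc (F j).1 (F j).2 = ∅) ∨
    (∃ I : Finset (Fin (r * s)), I.card = s ∧ ∀ i ∈ I, ∀ j ∈ I, i ≠ j →
        (Set.Icc (F i).1 (F i).2 ∩ Set.Icc (F j).1 (F j).2).Nonempty) := by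
  classical
  -- P S i : S is a "chain" of pairwise disjoint intervals with top element i
  set P : Finset (Fin (r * s)) → Fin (r * s) → Prop := fun S i =>
    i ∈ S ∧ (∀ k ∈ S, ∀ l ∈ S, k ≠ l → (F k).2 < (F l).1 ∨ (F l).2 < (F k).1) ∧
      (∀ k ∈ S, k ≠ i → (F k).2 < (F i).1) with hP
  set c : Fin (r * s) → ℕ := fun i =>
    ((Finset.univ.powerset).filter (fun S => P S i)).sup Finset.card with hc
  have hsingle : ∀ i, P {i} i := by
    intro i
    refine ⟨Finset.mem_singleton_self i, ?_, ?_⟩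
    · intro k hk l hl hkl
      simp only [Finset.mem_singleton] at hk hl
      exact absurd (hk.trans hl.symm) hkl
    · intro k hk hki
      simp only [Finset.mem_singleton] at hk
      exact absurd hk hki
  have hne : ∀ i, ((Finset.univ.powerset).filter (fun S => P S i)).Nonempty := by
    intro i
    have hm : {i} ∈ (Finset.univ.powerset).filter (fun S => P S i) :=
      Finset.mem_filter.2 ⟨Finset.mem_powerset.2 (Finset.subset_univ _), hsingle i⟩
    exact ⟨{i}, hm⟩
  have hone : ∀ i, 1 ≤ c i := by
    intro i
    have hm : {i} ∈ (Finset.univ.powerset).filter (fun S => P S i) :=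
      Finset.mem_filter.2 ⟨Finset.mem_powerset.2 (Finset.subset_univ _), hsingle i⟩
    have := Finset.le_sup (f := Finset.card) hm
    simpa only [Finset.card_singleton] using this
  have hattain : ∀ i, ∃ S, P S i ∧ S.card = c i := by
    intro i
    obtain ⟨S, hS, hSc⟩ := Finset.exists_mem_eq_sup _ (hne i) Finset.card
    exact ⟨S, (Finset.mem_filter.1 hS).2, hSc.symm⟩
  -- key step lemma
  have hkey : ∀ i j, (F i).2 < (F j).1 → c i + 1 ≤ c j := by
    intro i j hij
    obtain ⟨S, ⟨hiS, hpair, htop⟩, hcard⟩ := hattain i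
    have hleft : ∀ k ∈ S, (F k).2 < (F j).1 := by
      intro k hk
      rcases eq_or_ne k i with rfl | hki
      · exact hij
      · exact lt_of_lt_of_le (htop k hk hki) ((hF i).trans hij.le)
    have hjS : j ∉ S := by
      intro hjS
      exact absurd (hleft j hjS) (not_lt.2 (hF j))
    have hPj : P (insert j S) j := by
      refine ⟨Finset.mem_insert_self _ _, ?_, ?_⟩
      · intro k hk l hl hkl
        rcases Finset.mem_insert.1 hl with hlj | hlS
        · subst hlj
          rcases Finset.mem_insert.1 hk with hkj | hkS
          · exact absurd hkj hkl
          · exact Or.inl (hleft k hkS)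
        · rcases Finset.mem_insert.1 hk with hkj | hkS
          · subst hkj
            exact Or.inr (hleft l hlS)
          · exact hpair k hkS l hlS hkl
      · intro k hk hkj
        rcases Finset.mem_insert.1 hk with rfl | hk
        · exact absurd rfl hkj
        · exact hleft k hk
    have hm : insert j S ∈ (Finset.univ.powerset).filter (fun S => P S j) :=
      Finset.mem_filter.2 ⟨Finset.mem_powerset.2 (Finset.subset_univ _), hPj⟩
    have := Finset.le_sup (f := Finset.card) hm
    rw [Finset.card_insert_of_notMem hjS, hcard] at this
    exact this
  by_cases hcase : ∃ i, r ≤ c i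
  · -- r pairwise disjoint intervals
    left
    obtain ⟨i, hi⟩ := hcase
    obtain ⟨S, ⟨hiS, hpair, _⟩, hcard⟩ := hattain i
    obtain ⟨T, hTS, hT⟩ := Finset.exists_subset_card_eq (s := S) (n := r) (by omega)
    refine ⟨T, hT, ?_⟩
    intro a ha b hb hab
    rw [Set.eq_empty_iff_forall_notMem]
    rintro z ⟨⟨ha1, ha2⟩, hb1, hb2⟩
    rcases hpair a (hTS ha) b (hTS hb) hab with h | h
    · exact absurd ((ha2.trans_lt h).trans_le hb1) (lt_irrefl z)
    · exact absurd ((hb2.trans_lt h).trans_le ha1) (lt_irrefl z)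
  · -- s pairwise intersecting intervals
    right
    push_neg at hcase
    have hr2 : 2 ≤ r := by
      have : Fin (r * s) := ⟨0, Nat.mul_pos hr hs⟩
      have := hone this
      have := hcase ‹Fin (r * s)›
      omega
    have hmaps : ∀ a ∈ (Finset.univ : Finset (Fin (r * s))), c a ∈ Finset.Icc 1 (r - 1) := by
      intro a _
      have h1 := hone a
      have h2 := hcase a
      exact Finset.mem_Icc.2 ⟨h1, by omega⟩
    obtain ⟨v, _, hv⟩ := Finset.exists_le_card_fiber_of_mul_le_card_of_maps_to hmaps
      (⟨1, Finset.mem_Icc.2 ⟨le_refl 1, by omega⟩⟩) (by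
        rw [Finset.card_univ, Fintype.card_fin, Nat.card_Icc]
        have h11 : r - 1 + 1 - 1 = r - 1 := by omega
        rw [h11]
        exact Nat.mul_le_mul_right s (by omega))
    obtain ⟨T, hTsub, hT⟩ := Finset.exists_subset_card_eq (n := s) hv
    refine ⟨T, hT, ?_⟩
    intro a ha b hb hab
    have hca : c a = v := by
      have := hTsub ha; simp only [Finset.mem_filter] at this; exact this.2
    have hcb : c b = v := by
      have := hTsub hb; simp only [Finset.mem_filter] at this; exact this.2
    by_contra hcon
    rw [Set.not_nonempty_iff_eq_empty, Set.eq_empty_iff_forall_notMem] at hcon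
    have hmeet : (F b).2 < (F a).1 ∨ (F a).2 < (F b).1 := by
      by_contra h
      push_neg at h
      exact hcon (max (F a).1 (F b).1)
        ⟨⟨le_max_left _ _, max_le (hF a) h.2⟩, ⟨le_max_right _ _, max_le h.1 (hF b)⟩⟩
    rcases hmeet with h | h
    · have := hkey b a h; omega
    · have := hkey a b h; omega
end
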